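/- arXiv:math/0303187 — 4 statements merged into one kernel-verified Lean document; each statement's English description precedes it below -/
import Mathlib

section
/- Let H be a nonnegatively graded ring, finitely generated over a field k = H^0 by elements of positive degree, and let M be a finitely generated graded H-module of depth d. If ζ_1, …, ζ_r is a filter-regular sequence for M (i.e., for each i the multiplication map ζ_{i+1} on M/(ζ_1,…,ζ_i) has kernel of finite length, and M/(ζ_1,…,ζ_r) has finite length), then ζ_1, …, ζ_d is a regular sequence on M. -/
open RingTheory.Sequence


section SeqDefs

variable {R M : Type*} [CommRing R] [AddCommGroup M] [Module R M]

/-- `z` is regular on `M ⧸ S`, phrased in `M`. -/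
def SReg (S : Submodule R M) (z : R) : Prop := ∀ m : M, z • m ∈ S → m ∈ S

/-- regular sequence on `M ⧸ S`, phrased in `M`. -/
def SRS (S : Submodule R M) : List R → Prop
  | [] => True
  | z :: l => SReg S z ∧ SRS (S ⊔ Ideal.span {z} • ⊤) l

lemma sreg_iff_quot (S : Submodule R M) (z : R) :
    IsSMulRegular (M ⧸ S) z ↔ SReg S z := by
  constructor
  · intro h m hm
    have : z • (Submodule.Quotient.mk m : M ⧸ S) = z • (0 : M ⧸ S) := by
      rw [smul_zero, ← Submodule.Quotient.mk_smul, Submodule.Quotient.mk_eq_zero]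
      exact hm
    have := h this
    rwa [Submodule.Quotient.mk_eq_zero] at this
  · intro h a b hab
    obtain ⟨a, rfl⟩ := Submodule.Quotient.mk_surjective S a
    obtain ⟨b, rfl⟩ := Submodule.Quotient.mk_surjective S b
    simp only [← Submodule.Quotient.mk_smul] at hab
    have : z • a - z • b ∈ S := (Submodule.Quotient.eq S).mp hab
    rw [← smul_sub] at this
    have := h _ this
    exact (Submodule.Quotient.eq S).mpr this

lemma st_nil (S : Submodule R M) :
    S ⊔ (Ideal.ofList ([] : List R)) • (⊤ : Submodule R M) = S := by
  rw [Ideal.ofList_nil, Submodule.bot_smul, sup_bot_eq]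

lemma st_cons (S : Submodule R M) (z : R) (l : List R) :
    S ⊔ Ideal.ofList (z :: l) • (⊤ : Submodule R M) =
      (S ⊔ Ideal.span {z} • ⊤) ⊔ Ideal.ofList l • ⊤ := by
  rw [Ideal.ofList_cons_smul, Submodule.ideal_span_singleton_smul, sup_assoc]

lemma srs_iff_forall (l : List R) : ∀ S : Submodule R M,
    SRS S l ↔ ∀ (i : ℕ) (h : i < l.length),
      SReg (S ⊔ Ideal.ofList (l.take i) • ⊤) l[i] := by
  induction l with
  | nil => intro S; simp [SRS]
  | cons z l ih =>
    intro S
    constructor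
    · rintro ⟨h0, hl⟩ i hi
      match i with
      | 0 => rw [List.take_zero, st_nil]; simpa using h0
      | (i+1) =>
        rw [List.take_succ_cons, List.getElem_cons_succ, st_cons]
        exact (ih _).mp hl i (by simpa using hi)
    · intro h
      refine ⟨?_, (ih _).mpr fun i hi => ?_⟩
      · have := h 0 (by simp)
        rw [List.take_zero, st_nil] at this
        simpa using this
      · have := h (i+1) (by simpa using hi)
        rwa [List.take_succ_cons, List.getElem_cons_succ, st_cons] at this

lemma isWeaklyRegular_iff_srs (l : List R) :
    IsWeaklyRegular M l ↔ SRS (⊥ : Submodule R M) l := by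
  rw [isWeaklyRegular_iff, srs_iff_forall]
  refine forall_congr' fun i => forall_congr' fun hi => ?_
  rw [sreg_iff_quot, bot_sup_eq]

lemma srs_append (l₁ l₂ : List R) : ∀ S : Submodule R M,
    SRS S (l₁ ++ l₂) ↔ SRS S l₁ ∧ SRS (S ⊔ Ideal.ofList l₁ • ⊤) l₂ := by
  induction l₁ with
  | nil => intro S; simp [SRS, st_nil]
  | cons z l ih =>
    intro S
    rw [show (z :: l) ++ l₂ = z :: (l ++ l₂) from rfl]
    show (SReg S z ∧ SRS _ (l ++ l₂)) ↔ _
    rw [ih, st_cons]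
    exact ⟨fun h => ⟨⟨h.1, h.2.1⟩, h.2.2⟩, fun h => ⟨h.1.1, h.1.2, h.2⟩⟩

end SeqDefs

section Ass

variable {R M : Type*} [CommRing R] [AddCommGroup M] [Module R M]

lemma isAssociatedPrime_sub_or_quot [IsNoetherianRing R] (N' : Submodule R M) {P : Ideal R}
    (hP : IsAssociatedPrime P M) :
    IsAssociatedPrime P N' ∨ IsAssociatedPrime P (M ⧸ N') := by
  obtain ⟨hPp, x, hx⟩ := isAssociatedPrime_iff.mp hP
  by_cases hcase : ∃ a : R, a • x ≠ 0 ∧ a • x ∈ N'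
  · obtain ⟨a, ha0, haN⟩ := hcase
    left
    refine isAssociatedPrime_iff.mpr ⟨hPp, ⟨a • x, haN⟩, le_antisymm ?_ ?_⟩
    · intro r hr
      rw [Submodule.mem_colon_singleton, Submodule.mem_bot]
      have hrx : r • x = 0 := by
        have : r ∈ (⊥ : Submodule R M).colon {x} := hx ▸ hr
        rwa [Submodule.mem_colon_singleton, Submodule.mem_bot] at this
      ext
      show r • (a • x) = (0 : M)
      rw [smul_comm, hrx, smul_zero]
    · intro r hr
      rw [Submodule.mem_colon_singleton, Submodule.mem_bot] at hr
      have : (r * a) • x = 0 := by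
        have : (r • (⟨a • x, haN⟩ : N') : M) = 0 := congrArg Subtype.val hr
        simpa [mul_smul] using this
      have hmem : r * a ∈ P := by
        rw [hx, Submodule.mem_colon_singleton, Submodule.mem_bot]; exact this
      rcases hPp.mem_or_mem hmem with h | h
      · exact h
      · exfalso
        apply ha0
        have : a ∈ (⊥ : Submodule R M).colon {x} := hx ▸ h
        rwa [Submodule.mem_colon_singleton, Submodule.mem_bot] at this
  · push_neg at hcase
    right
    refine isAssociatedPrime_iff.mpr ⟨hPp, Submodule.Quotient.mk x, le_antisymm ?_ ?_⟩
    · intro r hr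
      rw [Submodule.mem_colon_singleton, Submodule.mem_bot, ← Submodule.Quotient.mk_smul,
        Submodule.Quotient.mk_eq_zero]
      have : r • x = 0 := by
        have : r ∈ (⊥ : Submodule R M).colon {x} := hx ▸ hr
        rwa [Submodule.mem_colon_singleton, Submodule.mem_bot] at this
      rw [this]; exact N'.zero_mem
    · intro r hr
      rw [Submodule.mem_colon_singleton, Submodule.mem_bot, ← Submodule.Quotient.mk_smul,
        Submodule.Quotient.mk_eq_zero] at hr
      have : r • x = 0 := by
        by_contra h
        exact hcase r h hr
      rw [hx, Submodule.mem_colon_singleton, Submodule.mem_bot]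
      exact this

end Ass

section AssFin

variable {R M : Type*} [CommRing R] [AddCommGroup M] [Module R M]

lemma associatedPrimes_finite [IsNoetherianRing R] [Module.Finite R M] :
    (associatedPrimes R M).Finite := by
  have hNoeth : IsNoetherian R M := inferInstance
  suffices h : ∀ N' : Submodule R M, (associatedPrimes R (M ⧸ N')).Finite by
    have := h ⊥
    rwa [LinearEquiv.AssociatedPrimes.eq (Submodule.quotEquivOfEqBot (⊥ : Submodule R M) rfl)] at this
  intro N'
  induction N' using IsNoetherian.induction with
  | hgt N' IH =>
  by_cases hN : N' = ⊤
  · subst hN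
    have : Subsingleton (M ⧸ (⊤ : Submodule R M)) :=
      Submodule.Quotient.subsingleton_iff.mpr rfl
    rw [associatedPrimes.eq_empty_of_subsingleton]
    exact Set.finite_empty
  · have : Nontrivial (M ⧸ N') :=
      Submodule.Quotient.nontrivial_iff.mpr hN
    obtain ⟨P, hP⟩ := associatedPrimes.nonempty R (M ⧸ N')
    obtain ⟨hPp, xb, hxb⟩ := isAssociatedPrime_iff.mp hP
    obtain ⟨x, rfl⟩ := Submodule.Quotient.mk_surjective N' xb
    have hx : x ∉ N' := by
      intro hxm
      apply hPp.ne_top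
      have h0 : (Submodule.Quotient.mk x : M ⧸ N') = 0 :=
        (Submodule.Quotient.mk_eq_zero _).mpr hxm
      rw [hxb, h0, eq_top_iff]
      intro r _
      rw [Submodule.mem_colon_singleton, Submodule.mem_bot, smul_zero]
    set N'' : Submodule R M := N' ⊔ Submodule.span R {x} with hN''
    have hlt : N' < N'' := by
      refine lt_of_le_of_ne le_sup_left fun h => hx ?_
      rw [h]
      exact Submodule.mem_sup_right (Submodule.mem_span_singleton_self x)
    -- the submodule span of the class of x
    have hmap : Submodule.map N'.mkQ (Submodule.span R {x}) =
        Submodule.span R {Submodule.Quotient.mk x} := by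
      rw [Submodule.map_span, Set.image_singleton]; rfl
    -- Ass of the cyclic submodule is {P}
    have hcyc : (associatedPrimes R (Submodule.span R {(Submodule.Quotient.mk x : M ⧸ N')})).Finite := by
      have hker : LinearMap.ker (LinearMap.toSpanSingleton R (M ⧸ N')
          (Submodule.Quotient.mk x)) = P := by
        ext r
        rw [LinearMap.mem_ker, hxb, Submodule.mem_colon_singleton, Submodule.mem_bot]
        rfl
      have e : (R ⧸ P) ≃ₗ[R] ↥(Submodule.span R {(Submodule.Quotient.mk x : M ⧸ N')}) :=
        (Submodule.quotEquivOfEq _ _ hker.symm) ≪≫ₗ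
          (LinearMap.quotKerEquivRange _) ≪≫ₗ
          (LinearEquiv.ofEq _ _ (LinearMap.span_singleton_eq_range R (M ⧸ N') _).symm)
      rw [← LinearEquiv.AssociatedPrimes.eq e,
        associatedPrimes.eq_singleton_of_isPrimary (hPp.isPrimary)]
      exact Set.finite_singleton _
    have hquot : (associatedPrimes R
        ((M ⧸ N') ⧸ (Submodule.span R {(Submodule.Quotient.mk x : M ⧸ N')}))).Finite := by
      have e := Submodule.quotientQuotientEquivQuotientSup N' (Submodule.span R {x})
      rw [hmap] at e
      rw [LinearEquiv.AssociatedPrimes.eq e]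
      exact IH N'' hlt
    refine Set.Finite.subset (hcyc.union hquot) ?_
    intro Q hQ
    rcases isAssociatedPrime_sub_or_quot _ hQ with h | h
    · exact Or.inl h
    · exact Or.inr h

end AssFin

section CommonReg

variable {R M : Type*} [CommRing R] [AddCommGroup M] [Module R M]

lemma exists_common_regular [IsNoetherianRing R] [Module.Finite R M] (I : Ideal R)
    (hsoc : ∀ x : M, (∀ a ∈ I, a • x = 0) → x = 0) :
    ∃ w ∈ I, IsSMulRegular M w := by
  by_contra hcon
  push_neg at hcon
  have hZD : (I : Set R) ⊆ {r : R | ∃ x : M, x ≠ 0 ∧ r • x = 0} := by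
    intro w hw
    have := hcon w hw
    rw [IsSMulRegular] at this
    rw [Function.not_injective_iff] at this
    obtain ⟨a, b, hab, hne⟩ := this
    exact ⟨a - b, sub_ne_zero.mpr hne, by rw [smul_sub, hab, sub_self]⟩
  rw [← biUnion_associatedPrimes_eq_zero_divisors] at hZD
  have hfin := associatedPrimes_finite (R := R) (M := M)
  have hsub : (I : Set R) ⊆ ⋃ p ∈ (hfin.toFinset : Set (Ideal R)), (p : Set R) := by
    intro a ha
    have := hZD ha
    simpa [Set.Finite.coe_toFinset] using this
  rw [Ideal.subset_union_prime (⊥ : Ideal R) (⊥ : Ideal R)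
    (fun p hp _ _ => (by
      rw [Set.Finite.mem_toFinset] at hp
      exact hp.isPrime))] at hsub
  obtain ⟨p, hp, hIp⟩ := hsub
  rw [Set.Finite.mem_toFinset] at hp
  obtain ⟨hpp, x, hx⟩ := isAssociatedPrime_iff.mp hp
  have hx0 : x ≠ 0 := by
    rintro rfl
    apply hpp.ne_top
    rw [hx, eq_top_iff]
    intro r _
    rw [Submodule.mem_colon_singleton, Submodule.mem_bot, smul_zero]
  refine hx0 (hsoc x fun a ha => ?_)
  have : a ∈ p := hIp ha
  rw [hx, Submodule.mem_colon_singleton, Submodule.mem_bot] at this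
  exact this

lemma exists_common_sreg [IsNoetherianRing R] [Module.Finite R M] (I : Ideal R)
    (ss : List (Submodule R M))
    (h : ∀ S ∈ ss, ∃ z ∈ I, SReg S z) :
    ∃ w ∈ I, ∀ S ∈ ss, SReg S w := by
  classical
  set t := ss.length with ht
  let N : Type _ := ∀ j : Fin t, M ⧸ ss[(j : ℕ)]
  have hsoc : ∀ x : N, (∀ a ∈ I, a • x = 0) → x = 0 := by
    intro x hx
    funext j
    obtain ⟨z, hzI, hz⟩ := h ss[(j:ℕ)] (List.getElem_mem _)
    obtain ⟨m, hmeq⟩ := Submodule.Quotient.mk_surjective _ (x j)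
    have hz0 : z • x j = 0 := congrFun (hx z hzI) j
    rw [← hmeq, ← Submodule.Quotient.mk_smul, Submodule.Quotient.mk_eq_zero] at hz0
    show x j = 0
    rw [← hmeq, Submodule.Quotient.mk_eq_zero]
    exact hz m hz0
  obtain ⟨w, hwI, hw⟩ := exists_common_regular (M := N) I hsoc
  refine ⟨w, hwI, ?_⟩
  intro S hS m hm
  obtain ⟨j, hj, hjS⟩ := List.getElem_of_mem hS
  subst hjS
  let x : N := Pi.single ⟨j, hj⟩ (Submodule.Quotient.mk m)
  have hx0 : w • x = 0 := by
    funext j'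
    show w • x j' = 0
    by_cases hj' : j' = ⟨j, hj⟩
    · subst hj'
      simp only [x, Pi.single_eq_same]
      rw [← Submodule.Quotient.mk_smul, Submodule.Quotient.mk_eq_zero]
      exact hm
    · simp [x, Pi.single_eq_of_ne hj']
  have hx : x = 0 := hw (show w • x = w • 0 by rw [hx0, smul_zero])
  have hmm : (Submodule.Quotient.mk m : M ⧸ ss[j]) = 0 := by
    have := congrFun hx ⟨j, hj⟩
    simp only [x, Pi.single_eq_same] at this
    exact this
  rwa [Submodule.Quotient.mk_eq_zero] at hmm

end CommonReg

section Kap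

variable {R M : Type*} [CommRing R] [AddCommGroup M] [Module R M]

/-- nonzero `I`-socle of `M ⧸ S`. -/
def Soc (I : Ideal R) (S : Submodule R M) : Prop :=
  ∃ m : M, m ∉ S ∧ ∀ a ∈ I, a • m ∈ S

lemma mem_span_singleton_smul_top {x : R} {m : M} :
    m ∈ Ideal.span {x} • (⊤ : Submodule R M) ↔ ∃ u : M, m = x • u := by
  constructor
  · intro hm
    refine Submodule.smul_induction_on hm ?_ ?_
    · rintro r hr n -
      obtain ⟨c, rfl⟩ := Ideal.mem_span_singleton'.mp hr
      exact ⟨c • n, by rw [mul_comm, mul_smul]⟩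
    · rintro m₁ m₂ ⟨u, rfl⟩ ⟨v, rfl⟩
      exact ⟨u + v, by module⟩
  · rintro ⟨u, rfl⟩
    exact Submodule.smul_mem_smul (Ideal.mem_span_singleton_self x) trivial

lemma mem_sup_sing {S : Submodule R M} {x : R} {m : M} :
    m ∈ S ⊔ Ideal.span {x} • (⊤ : Submodule R M) ↔
      ∃ s ∈ S, ∃ u : M, m = s + x • u := by
  rw [Submodule.mem_sup]
  constructor
  · rintro ⟨s, hs, t, ht, rfl⟩
    obtain ⟨u, rfl⟩ := mem_span_singleton_smul_top.mp ht
    exact ⟨s, hs, u, rfl⟩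
  · rintro ⟨s, hs, u, rfl⟩
    exact ⟨s, hs, x • u, mem_span_singleton_smul_top.mpr ⟨u, rfl⟩, rfl⟩

lemma mem_sup_sing' {S : Submodule R M} {x : R} {u : M} :
    x • u ∈ S ⊔ Ideal.span {x} • (⊤ : Submodule R M) :=
  mem_sup_sing.mpr ⟨0, S.zero_mem, u, by rw [zero_add]⟩

lemma sup_mono_sing {S : Submodule R M} {x : R} {m : M} (hm : m ∈ S) :
    m ∈ S ⊔ Ideal.span {x} • (⊤ : Submodule R M) :=
  Submodule.mem_sup_left hm

lemma soc_exchange {I : Ideal R} {S : Submodule R M} {x y : R}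
    (hyI : y ∈ I) (hx : SReg S x) (hy : SReg S y)
    (h : Soc I (S ⊔ Ideal.span {x} • ⊤)) : Soc I (S ⊔ Ideal.span {y} • ⊤) := by
  obtain ⟨m, hmn, hms⟩ := h
  obtain ⟨s, hs, m', hym⟩ := mem_sup_sing.mp (hms y hyI)
  refine ⟨m', ?_, ?_⟩
  · intro hm'
    obtain ⟨s₂, hs₂, v, rfl⟩ := mem_sup_sing.mp hm'
    apply hmn
    have hyv : y • (m - x • v) ∈ S := by
      have heq : y • (m - x • v) = s + x • s₂ :=
        calc y • (m - x • v) = y • m - y • (x • v) := by module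
        _ = (s + x • (s₂ + y • v)) - y • (x • v) := by rw [hym]
        _ = s + x • s₂ := by module
      rw [heq]; exact S.add_mem hs (S.smul_mem' x hs₂)
    have hms' := hy _ hyv
    have hrw : m = (m - x • v) + x • v := by abel
    rw [hrw]
    exact Submodule.add_mem _ (sup_mono_sing hms') mem_sup_sing'
  · intro a haI
    obtain ⟨s₁, hs₁, u, ham⟩ := mem_sup_sing.mp (hms a haI)
    have hxm' : x • m' = y • m - s := by rw [hym]; abel
    have hxu : x • u = a • m - s₁ := by rw [ham]; abel
    have key : a • m' - y • u ∈ S := by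
      refine hx _ ?_
      have heq : x • (a • m' - y • u) = y • s₁ - a • s :=
        calc x • (a • m' - y • u) = a • (x • m') - y • (x • u) := by module
        _ = a • (y • m - s) - y • (a • m - s₁) := by rw [hxm', hxu]
        _ = y • s₁ - a • s := by module
      rw [heq]
      exact S.sub_mem (S.smul_mem' y hs₁) (S.smul_mem' a hs)
    have hrw : a • m' = (a • m' - y • u) + y • u := by abel
    rw [hrw]
    exact Submodule.add_mem _ (sup_mono_sing key) mem_sup_sing'

lemma sreg_swap {S : Submodule R M} {a b : R} (ha : SReg S a)
    (hba : SReg (S ⊔ Ideal.span {a} • ⊤) b) :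
    SReg (S ⊔ Ideal.span {b} • ⊤) a := by
  intro m hm
  obtain ⟨s, hs, m', ham⟩ := mem_sup_sing.mp hm
  have hbm' : b • m' ∈ S ⊔ Ideal.span {a} • ⊤ := by
    have hrw : b • m' = a • m - s := by rw [ham]; abel
    rw [hrw]
    exact Submodule.sub_mem _ mem_sup_sing' (sup_mono_sing hs)
  obtain ⟨s', hs', u, hm'⟩ := mem_sup_sing.mp (hba _ hbm')
  have key : m - b • u ∈ S := by
    refine ha _ ?_
    have heq : a • (m - b • u) = s + b • s' :=
      calc a • (m - b • u) = a • m - b • (a • u) := by module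
      _ = (s + b • (s' + a • u)) - b • (a • u) := by rw [ham, hm']
      _ = s + b • s' := by module
    rw [heq]
    exact S.add_mem hs (S.smul_mem' b hs')
  have hrw : m = (m - b • u) + b • u := by abel
  rw [hrw]
  exact Submodule.add_mem _ (sup_mono_sing key) mem_sup_sing'

end Kap
section Kap2
variable {R M : Type*} [CommRing R] [AddCommGroup M] [Module R M]

lemma st_snoc (S : Submodule R M) (l : List R) (z : R) :
    S ⊔ Ideal.ofList (l ++ [z]) • (⊤ : Submodule R M) =
      (S ⊔ Ideal.ofList l • ⊤) ⊔ Ideal.span {z} • ⊤ := by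
  rw [Ideal.ofList_append, Submodule.sup_smul, ← sup_assoc, Ideal.ofList_singleton]

/-- bubbling a universally regular element to the front -/
lemma srs_bub : ∀ (l : List R) (S : Submodule R M) (w : R),
    SRS S l → (∀ j, j ≤ l.length → SReg (S ⊔ Ideal.ofList (l.take j) • ⊤) w) →
    SRS S (w :: l) := by
  intro l
  induction l with
  | nil =>
    intro S w _ hw
    refine ⟨?_, trivial⟩
    have := hw 0 (by simp)
    rwa [List.take_zero, st_nil] at this
  | cons u t ih =>
    intro S w hsrs hw
    obtain ⟨hu, ht⟩ := hsrs
    have hw0 : SReg S w := by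
      have := hw 0 (by simp)
      rwa [List.take_zero, st_nil] at this
    have hw1 : SReg (S ⊔ Ideal.span {u} • ⊤) w := by
      have := hw 1 (by simp)
      rwa [List.take_succ_cons, List.take_zero, st_cons, st_nil] at this
    refine ⟨hw0, ?_, ?_⟩
    · exact sreg_swap hu hw1
    · have hih := ih (S ⊔ Ideal.span {u} • ⊤) w ht ?_
      · rw [sup_right_comm]
        exact hih.2
      · intro j hj
        have := hw (j+1) (by simpa using hj)
        rwa [List.take_succ_cons, st_cons] at this

/-- Kaplansky-style: the property of having nonzero socle mod a regular
sequence only depends on the length of the sequence. -/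
lemma soc_iff_of_srs [IsNoetherianRing R] [Module.Finite R M] (I : Ideal R) :
    ∀ (n : ℕ) (S : Submodule R M) (xs ys : List R),
    xs.length = n → ys.length = n →
    (∀ a ∈ xs, a ∈ I) → (∀ a ∈ ys, a ∈ I) →
    SRS S xs → SRS S ys →
    (Soc I (S ⊔ Ideal.ofList xs • ⊤) ↔ Soc I (S ⊔ Ideal.ofList ys • ⊤)) := by
  intro n
  induction n with
  | zero =>
    intro S xs ys hx hy _ _ _ _
    rw [List.length_eq_zero_iff.mp hx, List.length_eq_zero_iff.mp hy]
  | succ n ih =>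
    intro S xs ys hxlen hylen hxI hyI hxs hys
    rcases List.eq_nil_or_concat xs with rfl | ⟨a, x, rfl⟩
    · simp at hxlen
    rcases List.eq_nil_or_concat ys with rfl | ⟨b, y, rfl⟩
    · simp at hylen
    simp only [List.concat_eq_append] at hxlen hylen hxI hyI hxs hys ⊢
    have halen : a.length = n := by simpa using hxlen
    have hblen : b.length = n := by simpa using hylen
    obtain ⟨ha, hx'⟩ := (srs_append a [x] S).mp hxs
    obtain ⟨hb, hy'⟩ := (srs_append b [y] S).mp hys
    have hxreg : SReg (S ⊔ Ideal.ofList a • ⊤) x := hx'.1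
    have hyreg : SReg (S ⊔ Ideal.ofList b • ⊤) y := hy'.1
    have hxI' : x ∈ I := hxI x (by simp)
    have hyI' : y ∈ I := hyI y (by simp)
    -- find a common regular element w for all stages of a and b
    set ss : List (Submodule R M) :=
      ((List.range (n+1)).map fun j => S ⊔ Ideal.ofList (a.take j) • ⊤) ++
      ((List.range (n+1)).map fun j => S ⊔ Ideal.ofList (b.take j) • ⊤) with hss
    have hstage : ∀ (c : List R) (z : R), c.length = n → SRS S c →
        SReg (S ⊔ Ideal.ofList c • ⊤) z → (∀ e ∈ c, e ∈ I) → z ∈ I →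
        ∀ j, j ≤ n → ∃ w ∈ I, SReg (S ⊔ Ideal.ofList (c.take j) • ⊤) w := by
      intro c z hclen hc hz hcI hzI j hj
      rcases eq_or_lt_of_le hj with rfl | hjlt
      · rw [← hclen, List.take_length]
        exact ⟨z, hzI, hz⟩
      · have hjlt2 : j < c.length := by omega
        have hreg := (srs_iff_forall c S).mp hc j hjlt2
        refine ⟨_, hcI _ (List.getElem_mem hjlt2), hreg⟩
    have hcommon : ∃ w ∈ I, ∀ T ∈ ss, SReg T w := by
      apply exists_common_sreg I
      intro T hT
      rw [hss, List.mem_append] at hT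
      rcases hT with hT | hT <;>
      · obtain ⟨j, hj, rfl⟩ := List.mem_map.mp hT
        rw [List.mem_range] at hj
        first
        | exact hstage a x halen ha hxreg (fun e he => hxI e (by simp [he])) hxI' j (by omega)
        | exact hstage b y hblen hb hyreg (fun e he => hyI e (by simp [he])) hyI' j (by omega)
    obtain ⟨w, hwI, hwreg⟩ := hcommon
    have hwstage : ∀ (c : List R), c.length = n →
        ((List.range (n+1)).map fun j => S ⊔ Ideal.ofList (c.take j) • ⊤) ⊆ ss →
        ∀ j, j ≤ c.length → SReg (S ⊔ Ideal.ofList (c.take j) • ⊤) w := by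
      intro c hclen hsub j hj
      refine hwreg _ (hsub ?_)
      exact List.mem_map.mpr ⟨j, List.mem_range.mpr (by omega), rfl⟩
    have hwa := hwstage a halen (by rw [hss]; exact fun T hT => List.mem_append_left _ hT)
    have hwb := hwstage b hblen (by rw [hss]; exact fun T hT => List.mem_append_right _ hT)
    -- replace x by w, and y by w
    have hwa' : SReg (S ⊔ Ideal.ofList a • ⊤) w := by
      have := hwa a.length le_rfl
      rwa [List.take_length] at this
    have hwb' : SReg (S ⊔ Ideal.ofList b • ⊤) w := by
      have := hwb b.length le_rfl
      rwa [List.take_length] at this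
    have h1 : Soc I (S ⊔ Ideal.ofList (a ++ [x]) • ⊤) ↔
        Soc I ((S ⊔ Ideal.ofList a • ⊤) ⊔ Ideal.span {w} • ⊤) := by
      rw [st_snoc]
      exact ⟨fun h => soc_exchange hwI hxreg hwa' h,
             fun h => soc_exchange hxI' hwa' hxreg h⟩
    have h2 : Soc I (S ⊔ Ideal.ofList (b ++ [y]) • ⊤) ↔
        Soc I ((S ⊔ Ideal.ofList b • ⊤) ⊔ Ideal.span {w} • ⊤) := by
      rw [st_snoc]
      exact ⟨fun h => soc_exchange hwI hyreg hwb' h,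
             fun h => soc_exchange hyI' hwb' hyreg h⟩
    -- bubble w to the front
    have hba : SRS (S ⊔ Ideal.span {w} • ⊤) a := (srs_bub a S w ha (fun j hj => hwa j (by omega))).2
    have hbb : SRS (S ⊔ Ideal.span {w} • ⊤) b := (srs_bub b S w hb (fun j hj => hwb j (by omega))).2
    have h3 := ih (S ⊔ Ideal.span {w} • ⊤) a b halen hblen
      (fun e he => hxI e (by simp [he])) (fun e he => hyI e (by simp [he])) hba hbb
    rw [h1, h2, sup_right_comm S (Ideal.ofList a • ⊤), sup_right_comm S (Ideal.ofList b • ⊤)]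
    exact h3

end Kap2

section Graded

variable {k : Type} [Field k] {A : Type} [CommRing A] [Algebra k A]
    (𝒜 : ℤ → Submodule k A) [GradedAlgebra 𝒜]
    {M : Type} [AddCommGroup M] [Module k M] [Module A M] [IsScalarTower k A M]
    (ℳ : ℤ → Submodule k M) [DirectSum.Decomposition ℳ]

open DirectSum

/-- the degree-`j` component of `m` -/
noncomputable def pc (j : ℤ) (m : M) : M := (decompose ℳ m j : M)

lemma pc_add (j : ℤ) (x y : M) : pc ℳ j (x + y) = pc ℳ j x + pc ℳ j y := by
  simp [pc, DirectSum.decompose_add]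

lemma pc_zero (j : ℤ) : pc ℳ j (0 : M) = 0 := by simp [pc]

lemma pc_mem (j : ℤ) (m : M) : pc ℳ j m ∈ ℳ j := SetLike.coe_mem _

lemma pc_of_mem_same {j : ℤ} {m : M} (h : m ∈ ℳ j) : pc ℳ j m = m :=
  DirectSum.decompose_of_mem_same ℳ h

lemma pc_of_mem_ne {i j : ℤ} {m : M} (h : m ∈ ℳ i) (hne : i ≠ j) : pc ℳ j m = 0 :=
  DirectSum.decompose_of_mem_ne ℳ h hne

/-- `pc` bundled as an additive monoid hom. -/
noncomputable def pcHom (j : ℤ) : M →+ M :=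
  AddMonoidHom.mk' (pc ℳ j) (pc_add ℳ j)

lemma pc_sum {α : Type*} (j : ℤ) (s : Finset α) (f : α → M) :
    pc ℳ j (∑ i ∈ s, f i) = ∑ i ∈ s, pc ℳ j (f i) :=
  map_sum (pcHom ℳ j) f s

lemma pc_sum_support (m : M) [∀ (i : ℤ) (x : ↥(ℳ i)), Decidable (x ≠ 0)] :
    ∑ q ∈ (decompose ℳ m).support, pc ℳ q m = m :=
  DirectSum.sum_support_decompose ℳ m

variable (hsmul : ∀ (i j : ℤ), ∀ a ∈ 𝒜 i, ∀ x ∈ ℳ j, a • x ∈ ℳ (i + j))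

include hsmul in
/-- projection commutes with homogeneous scalar multiplication -/
lemma pc_smul_hom {p : ℤ} {a : A} (ha : a ∈ 𝒜 p) (x : M) (j : ℤ) :
    pc ℳ j (a • x) = a • pc ℳ (j - p) x := by
  classical
  conv_lhs => rw [← DirectSum.sum_support_decompose ℳ x]
  rw [Finset.smul_sum, pc_sum]
  rw [Finset.sum_eq_single (j - p)]
  · by_cases h : (j - p) ∈ (decompose ℳ x).support
    · exact pc_of_mem_same ℳ (by
        have := hsmul p (j - p) a ha _ (pc_mem ℳ (j-p) x)
        rwa [show p + (j - p) = j by ring] at this)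
    · rw [DFinsupp.notMem_support_iff] at h
      show pc ℳ j (a • ((decompose ℳ x) (j-p) : M)) = a • ((decompose ℳ x) (j-p) : M)
      rw [h]
      simp [pc_zero]
  · intro q hq hqne
    refine pc_of_mem_ne ℳ (hsmul p q a ha _ (pc_mem ℳ q x)) ?_
    omega
  · intro h
    rw [DFinsupp.notMem_support_iff] at h
    show pc ℳ j (a • ((decompose ℳ x) (j-p) : M)) = 0
    rw [h]
    simp [pc_zero]

include hsmul in
/-- projection of a general scalar multiple, as a sum over the support of the scalar -/
lemma pc_smul_sum [∀ (i : ℤ) (x : ↥(𝒜 i)), Decidable (x ≠ 0)] (a : A) (x : M) (j : ℤ) :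
    pc ℳ j (a • x) =
      ∑ p ∈ (decompose 𝒜 a).support, ((decompose 𝒜 a p : A) • pc ℳ (j - p) x) := by
  conv_lhs => rw [← DirectSum.sum_support_decompose 𝒜 a]
  rw [Finset.sum_smul, pc_sum]
  refine Finset.sum_congr rfl fun p hp => ?_
  exact pc_smul_hom 𝒜 ℳ hsmul (SetLike.coe_mem _) x j

/-- description of `span T • ⊤` -/
lemma span_smul_top_eq (T : Set A) :
    Ideal.span T • (⊤ : Submodule A M) =
      Submodule.span A {v : M | ∃ t ∈ T, ∃ m : M, v = t • m} := by
  apply le_antisymm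
  · rw [Submodule.smul_le]
    intro r hr m _
    induction hr using Submodule.span_induction with
    | mem t ht => exact Submodule.subset_span ⟨t, ht, m, rfl⟩
    | zero => rw [zero_smul]; exact Submodule.zero_mem _
    | add u v _ _ hu hv => rw [add_smul]; exact Submodule.add_mem _ hu hv
    | smul c u _ hu =>
      rw [smul_eq_mul, mul_smul]
      exact Submodule.smul_mem _ c hu
  · rw [Submodule.span_le]
    rintro v ⟨t, ht, m, rfl⟩
    exact Submodule.smul_mem_smul (Ideal.subset_span ht) trivial

include hsmul in
/-- the graded pieces of homogeneously generated submodules -/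
lemma pc_mem_span (T : Set A) (hT : ∀ t ∈ T, ∃ p : ℤ, t ∈ 𝒜 p)
    {x : M} (hx : x ∈ Submodule.span A {v : M | ∃ t ∈ T, ∃ m : M, v = t • m}) :
    ∀ j : ℤ, pc ℳ j x ∈ Submodule.span A {v : M | ∃ t ∈ T, ∃ m : M, v = t • m} := by
  classical
  induction hx using Submodule.span_induction with
  | mem v hv =>
    intro j
    obtain ⟨t, ht, m, rfl⟩ := hv
    obtain ⟨p, hp⟩ := hT t ht
    rw [pc_smul_hom 𝒜 ℳ hsmul hp]
    exact Submodule.subset_span ⟨t, ht, _, rfl⟩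
  | zero => intro j; rw [pc_zero]; exact Submodule.zero_mem _
  | add u v _ _ hu hv => intro j; rw [pc_add]; exact Submodule.add_mem _ (hu j) (hv j)
  | smul c u _ hu =>
    intro j
    rw [pc_smul_sum 𝒜 ℳ hsmul]
    exact Submodule.sum_mem _ fun p _ => Submodule.smul_mem _ _ (hu (j - p))

end Graded

section Graded2

variable {k : Type} [Field k] {A : Type} [CommRing A] [Algebra k A]
    (𝒜 : ℤ → Submodule k A) [GradedAlgebra 𝒜]
    {M : Type} [AddCommGroup M] [Module k M] [Module A M] [IsScalarTower k A M]
    (ℳ : ℤ → Submodule k M) [DirectSum.Decomposition ℳ]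
    (hsmul : ∀ (i j : ℤ), ∀ a ∈ 𝒜 i, ∀ x ∈ ℳ j, a • x ∈ ℳ (i + j))
    (hneg : ∀ n : ℤ, n < 0 → 𝒜 n = ⊥)

open DirectSum

include hsmul hneg in
lemma pc_eventually_zero [Module.Finite A M] :
    ∃ B : ℤ, ∀ (x : M) (j : ℤ), j < B → pc ℳ j x = 0 := by
  classical
  obtain ⟨s, hs⟩ := Module.Finite.fg_top (R := A) (M := M)
  set U : Finset ℤ := s.biUnion (fun g => (decompose ℳ g).support) with hU
  set B : ℤ := if h : U.Nonempty then U.min' h else 0 with hB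
  have hgen : ∀ g ∈ (s : Set M), ∀ j : ℤ, j < B → pc ℳ j g = 0 := by
    intro g hg j hj
    have hnotmem : j ∉ (decompose ℳ g).support := by
      intro hmem
      have hjU : j ∈ U := Finset.mem_biUnion.mpr ⟨g, hg, hmem⟩
      have : B ≤ j := by
        rw [hB]
        rw [dif_pos ⟨j, hjU⟩]
        exact Finset.min'_le U j hjU
      omega
    rw [DFinsupp.notMem_support_iff] at hnotmem
    show ((decompose ℳ g) j : M) = 0
    rw [hnotmem]; rfl
  refine ⟨B, fun x j hj => ?_⟩
  have hx : x ∈ Submodule.span A (s : Set M) := by rw [hs]; trivial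
  revert j
  induction hx using Submodule.span_induction with
  | mem g hg => exact fun j hj => hgen g hg j hj
  | zero => exact fun j hj => pc_zero ℳ j
  | add u v _ _ hu hv => exact fun j hj => by rw [pc_add, hu j hj, hv j hj, add_zero]
  | smul c u _ hu =>
    intro j hj
    rw [pc_smul_sum 𝒜 ℳ hsmul]
    refine Finset.sum_eq_zero fun p _ => ?_
    by_cases hp : 0 ≤ p
    · rw [hu (j - p) (by omega), smul_zero]
    · have : ((decompose 𝒜 c) p : A) = 0 := by
        have hbot := hneg p (by omega)
        have h0 : ((decompose 𝒜 c) p : A) ∈ (⊥ : Submodule k A) := by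
          rw [← hbot]; exact SetLike.coe_mem _
        simpa using h0
      rw [this, zero_smul]

include hsmul hneg in
lemma span_smul_top_ne_top [Module.Finite A M] (hMnt : Nontrivial M)
    (T : Set A) (hT : ∀ t ∈ T, ∃ p : ℤ, 0 < p ∧ t ∈ 𝒜 p) :
    Ideal.span T • (⊤ : Submodule A M) ≠ ⊤ := by
  classical
  rw [span_smul_top_eq]
  intro htop
  obtain ⟨B, hB⟩ := pc_eventually_zero 𝒜 ℳ hsmul hneg
  obtain ⟨x0, hx0⟩ := exists_ne (0 : M)
  set Q : ℤ → Prop := fun q => ∃ y : M, y ∈ ℳ q ∧ y ≠ 0 with hQ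
  have hQbdd : ∃ b : ℤ, ∀ z : ℤ, Q z → b ≤ z := by
    refine ⟨B, fun q ⟨y, hym, hyne⟩ => ?_⟩
    by_contra hqB
    exact hyne ((pc_of_mem_same ℳ hym).symm.trans (hB y q (by omega)))
  have hQne : ∃ q, Q q := by
    by_contra hq
    push_neg at hq
    apply hx0
    have : ∀ q : ℤ, pc ℳ q x0 = 0 := by
      intro q
      by_contra hne
      exact hq q ⟨pc ℳ q x0, pc_mem ℳ q x0, hne⟩
    calc x0 = ∑ q ∈ (decompose ℳ x0).support, pc ℳ q x0 :=
          (DirectSum.sum_support_decompose ℳ x0).symm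
    _ = 0 := Finset.sum_eq_zero fun q _ => this q
  obtain ⟨j₀, ⟨y₀, hy₀m, hy₀ne⟩, hleast⟩ := Int.exists_least_of_bdd hQbdd hQne
  -- every element of the span has vanishing components in degrees ≤ j₀
  have hvanish : ∀ v ∈ Submodule.span A {v : M | ∃ t ∈ T, ∃ m : M, v = t • m},
      ∀ j : ℤ, j ≤ j₀ → pc ℳ j v = 0 := by
    intro v hv
    induction hv using Submodule.span_induction with
    | mem v hv =>
      intro j hj
      obtain ⟨t, ht, m, rfl⟩ := hv
      obtain ⟨p, hp, htp⟩ := hT t ht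
      rw [pc_smul_hom 𝒜 ℳ hsmul htp]
      have : pc ℳ (j - p) m = 0 := by
        by_contra hne
        have := hleast (j - p) ⟨pc ℳ (j - p) m, pc_mem ℳ (j - p) m, hne⟩
        omega
      rw [this, smul_zero]
    | zero => exact fun j hj => pc_zero ℳ j
    | add u v _ _ hu hv => exact fun j hj => by rw [pc_add, hu j hj, hv j hj, add_zero]
    | smul c u _ hu =>
      intro j hj
      rw [pc_smul_sum 𝒜 ℳ hsmul]
      refine Finset.sum_eq_zero fun p _ => ?_
      by_cases hp : 0 ≤ p
      · rw [hu (j - p) (by omega), smul_zero]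
      · have : ((decompose 𝒜 c) p : A) = 0 := by
          have hbot := hneg p (by omega)
          have h0 : ((decompose 𝒜 c) p : A) ∈ (⊥ : Submodule k A) := by
            rw [← hbot]; exact SetLike.coe_mem _
          simpa using h0
        rw [this, zero_smul]
  apply hy₀ne
  have hy₀S : y₀ ∈ Submodule.span A {v : M | ∃ t ∈ T, ∃ m : M, v = t • m} := by
    rw [htop]; trivial
  calc y₀ = pc ℳ j₀ y₀ := (pc_of_mem_same ℳ hy₀m).symm
  _ = 0 := hvanish y₀ hy₀S j₀ le_rfl

include hsmul in
lemma grad_dichotomy (𝔪 : Ideal A)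
    (h𝔪 : 𝔪 = Ideal.span (⋃ n : {n : ℤ // 0 < n}, ((𝒜 n.1 : Submodule k A) : Set A)))
    (T : Set A) (hT : ∀ t ∈ T, ∃ p : ℤ, 0 < p ∧ t ∈ 𝒜 p)
    {z : A} {nz : ℤ} (hz : z ∈ 𝒜 nz) (N : ℤ)
    (hbound : ∀ deg : ℤ, N ≤ deg → ∀ x ∈ ℳ deg,
      z • x ∈ Ideal.span T • (⊤ : Submodule A M) →
        x ∈ Ideal.span T • (⊤ : Submodule A M)) :
    (∀ m : M, z • m ∈ Ideal.span T • (⊤ : Submodule A M) →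
        m ∈ Ideal.span T • (⊤ : Submodule A M))
    ∨ ∃ m : M, m ∉ Ideal.span T • (⊤ : Submodule A M) ∧
        ∀ a ∈ 𝔪, a • m ∈ Ideal.span T • (⊤ : Submodule A M) := by
  classical
  set S := Ideal.span T • (⊤ : Submodule A M) with hS
  have hSspan : S = Submodule.span A {v : M | ∃ t ∈ T, ∃ m : M, v = t • m} :=
    span_smul_top_eq T
  have hpcS : ∀ v ∈ S, ∀ j : ℤ, pc ℳ j v ∈ S := by
    intro v hv j
    rw [hSspan] at hv ⊢
    exact pc_mem_span 𝒜 ℳ hsmul T (fun t ht => (hT t ht).imp fun p hp => hp.2) hv j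
  by_cases hreg : ∀ m : M, z • m ∈ S → m ∈ S
  · exact Or.inl hreg
  push_neg at hreg
  obtain ⟨m, hzm, hmS⟩ := hreg
  set P : ℤ → Prop := fun deg => ∃ x : M, x ∈ ℳ deg ∧ z • x ∈ S ∧ x ∉ S with hP
  have hPne : ∃ q, P q := by
    by_contra hq
    push_neg at hq
    apply hmS
    have hall : ∀ q : ℤ, pc ℳ q m ∈ S := by
      intro q
      by_contra hnot
      refine hq q ⟨pc ℳ q m, pc_mem ℳ q m, ?_, hnot⟩
      have : z • pc ℳ q m = pc ℳ (nz + q) (z • m) := by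
        rw [pc_smul_hom 𝒜 ℳ hsmul hz, show nz + q - nz = q by ring]
      rw [this]
      exact hpcS _ hzm _
    rw [show m = ∑ q ∈ (decompose ℳ m).support, pc ℳ q m from
      (DirectSum.sum_support_decompose ℳ m).symm]
    exact Submodule.sum_mem _ fun q _ => hall q
  have hPbdd : ∃ b : ℤ, ∀ deg : ℤ, P deg → deg ≤ b := by
    refine ⟨N, fun deg ⟨x, hxm, hzx, hxS⟩ => ?_⟩
    by_contra hdN
    exact hxS (hbound deg (by omega) x hxm hzx)
  obtain ⟨j₀, ⟨x₀, hx₀m, hzx₀, hx₀S⟩, hmax⟩ := Int.exists_greatest_of_bdd hPbdd hPne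
  right
  refine ⟨x₀, hx₀S, ?_⟩
  intro a ha
  rw [h𝔪] at ha
  induction ha using Submodule.span_induction with
  | mem t ht =>
    rw [Set.mem_iUnion] at ht
    obtain ⟨⟨p, hp⟩, htp⟩ := ht
    by_contra htS
    have hPp : P (p + j₀) := by
      refine ⟨t • x₀, hsmul p j₀ t htp x₀ hx₀m, ?_, htS⟩
      rw [smul_comm]
      exact Submodule.smul_mem _ t hzx₀
    have := hmax (p + j₀) hPp
    omega
  | zero => rw [zero_smul]; exact S.zero_mem
  | add u v _ _ hu hv => rw [add_smul]; exact S.add_mem hu hv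
  | smul c u _ hu =>
    rw [smul_eq_mul, mul_smul]
    exact S.smul_mem c hu

end Graded2

/-- Let `A` be a nonnegatively graded ring, finitely generated over
a field `k = A⁰` by elements of positive degree, `𝔪` its irrelevant maximal ideal,
and `M` a finitely generated graded `A`-module of depth `d` (with respect to `𝔪`).
If `ζ₁, …, ζ_r` is a filter-regular sequence of homogeneous parameters for `M`
(each `ζ_{i+1}` is injective in all large degrees on `M/(ζ₁,…,ζᵢ)M`, and
`M/(ζ₁,…,ζ_r)M` vanishes in large degrees), then `ζ₁, …, ζ_d` is a regular
sequence on `M`. -/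
theorem stmt0
    {k : Type} [Field k] {A : Type} [CommRing A] [Algebra k A]
    (𝒜 : ℤ → Submodule k A) [GradedAlgebra 𝒜]
    (hconn : (𝒜 0 : Set A) = Set.range (algebraMap k A))
    (hneg : ∀ n : ℤ, n < 0 → 𝒜 n = ⊥)
    (hfgA : ∃ s : Finset A, (∀ a ∈ s, ∃ n : ℤ, 0 < n ∧ a ∈ 𝒜 n) ∧
      Algebra.adjoin k (s : Set A) = ⊤)
    {M : Type} [AddCommGroup M] [Module k M] [Module A M] [IsScalarTower k A M]
    [Module.Finite A M] (hM : Nontrivial M)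
    (ℳ : ℤ → Submodule k M) [DirectSum.Decomposition ℳ]
    (hsmul : ∀ (i j : ℤ), ∀ a ∈ 𝒜 i, ∀ x ∈ ℳ j, a • x ∈ ℳ (i + j))
    (𝔪 : Ideal A)
    (h𝔪 : 𝔪 = Ideal.span (⋃ n : {n : ℤ // 0 < n}, ((𝒜 n.1 : Submodule k A) : Set A)))
    -- `M` has depth exactly `d` with respect to `𝔪`:
    (d : ℕ)
    (hdepth₁ : ∃ rs : List A, rs.length = d ∧ (∀ a ∈ rs, a ∈ 𝔪) ∧ IsRegular M rs)
    (hdepth₂ : ¬ ∃ rs : List A, rs.length = d + 1 ∧ (∀ a ∈ rs, a ∈ 𝔪) ∧ IsRegular M rs)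
    -- the filter-regular sequence `ζ`, homogeneous of positive degrees `n i`:
    (r : ℕ) (ζ : Fin r → A) (n : Fin r → ℤ)
    (hζhom : ∀ i, ζ i ∈ 𝒜 (n i)) (hζpos : ∀ i, 0 < n i)
    (hfr : ∀ i : Fin r, ∃ N : ℤ, ∀ deg : ℤ, N ≤ deg → ∀ x ∈ ℳ deg,
      ζ i • x ∈ Ideal.span (ζ '' {j | j < i}) • (⊤ : Submodule A M) →
      x ∈ Ideal.span (ζ '' {j | j < i}) • (⊤ : Submodule A M))
    (hfr' : ∃ N : ℤ, ∀ deg : ℤ, N ≤ deg → ∀ x ∈ ℳ deg,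
      x ∈ Ideal.span (Set.range ζ) • (⊤ : Submodule A M)) :
    IsRegular M ((List.ofFn ζ).take d) := by
  classical
  obtain ⟨sA, hsA1, hsA2⟩ := hfgA
  have hFT : Algebra.FiniteType k A := ⟨⟨sA, hsA2⟩⟩
  have hNoeth : IsNoetherianRing A := Algebra.FiniteType.isNoetherianRing k A
  obtain ⟨rs, hrslen, hrsmem, hrsreg⟩ := hdepth₁
  have hrs_srs : SRS (⊥ : Submodule A M) rs :=
    (isWeaklyRegular_iff_srs rs).mp hrsreg.toIsWeaklyRegular
  set L := List.ofFn ζ with hL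
  have hLlen : L.length = r := List.length_ofFn (f := ζ)
  have hLmem : ∀ x ∈ L, ∃ p : ℤ, 0 < p ∧ x ∈ 𝒜 p := by
    intro x hx
    rw [hL, List.mem_ofFn] at hx
    obtain ⟨i, rfl⟩ := hx
    exact ⟨n i, hζpos i, hζhom i⟩
  have h𝔪mem : ∀ x ∈ L, x ∈ 𝔪 := by
    intro x hx
    obtain ⟨p, hp, hxp⟩ := hLmem x hx
    rw [h𝔪]
    exact Ideal.subset_span (Set.mem_iUnion.mpr ⟨⟨p, hp⟩, hxp⟩)
  have hsetEq : ∀ (i : ℕ) (hir : i < r),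
      {x : A | x ∈ L.take i} = ζ '' {j : Fin r | j < ⟨i, hir⟩} := by
    intro i hir
    ext x
    simp only [Set.mem_setOf_eq, List.mem_take_iff_getElem, Set.mem_image]
    constructor
    · rintro ⟨m, hm, rfl⟩
      have hmL : m < L.length := lt_of_lt_of_le hm inf_le_right
      have hmr : m < r := by omega
      have hmi : m < i := lt_of_lt_of_le hm inf_le_left
      refine ⟨⟨m, hmr⟩, ?_, ?_⟩
      · exact Fin.mk_lt_mk.mpr hmi
      · exact (List.getElem_ofFn (f := ζ) (i := m) (by rwa [hL] at hmL)).symm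
    · rintro ⟨j, hj, rfl⟩
      have hji : (j : ℕ) < i := hj
      have hjr := j.isLt
      refine ⟨(j : ℕ), by show (j : ℕ) < i ⊓ L.length; rw [hLlen]; omega, ?_⟩
      exact (List.getElem_ofFn (f := ζ) (i := (j : ℕ)) (by simp only [List.length_ofFn]; omega)).trans
        (congrArg ζ (Fin.eta j _))
  have htake_succ : ∀ (i : ℕ) (hir : i < r),
      L.take (i + 1) = L.take i ++ [ζ ⟨i, hir⟩] := by
    intro i hir
    rw [List.take_succ, List.getElem?_eq_getElem (show i < L.length by rw [hLlen]; omega)]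
    simp only [Option.toList_some]
    congr 1
    exact congrArg (fun z => [z]) (List.getElem_ofFn (f := ζ) (i := i) (by simp only [List.length_ofFn]; omega))
  have main : ∀ i : ℕ, i ≤ min d r → SRS (⊥ : Submodule A M) (L.take i) := by
    intro i
    induction i with
    | zero => intro _; rw [List.take_zero]; trivial
    | succ i ih =>
      intro hi1
      have hid : i < d := by omega
      have hir : i < r := by omega
      have hprev := ih (by omega)
      have hlen_take : (L.take i).length = i := by
        rw [List.length_take]; omega
      have hIeq : Ideal.ofList (L.take i) =
          Ideal.span (ζ '' {j : Fin r | j < ⟨i, hir⟩}) :=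
        congrArg Ideal.span (hsetEq i hir)
      obtain ⟨N, hN⟩ := hfr ⟨i, hir⟩
      rw [← hIeq] at hN
      have hdich := grad_dichotomy 𝒜 ℳ hsmul 𝔪 h𝔪 {x : A | x ∈ L.take i}
        (fun t ht => hLmem t (List.take_subset i L ht))
        (hζhom ⟨i, hir⟩) N hN
      rcases hdich with hreg | hsoc
      · have hstep : SRS (⊥ : Submodule A M) (L.take i ++ [ζ ⟨i, hir⟩]) := by
          rw [srs_append]
          refine ⟨hprev, ?_, trivial⟩
          rw [bot_sup_eq]
          exact hreg
        rwa [← htake_succ i hir] at hstep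
      · exfalso
        have hsoc' : Soc 𝔪 ((⊥ : Submodule A M) ⊔ Ideal.ofList (L.take i) • ⊤) := by
          rw [bot_sup_eq]
          exact hsoc
        have hrs_take : SRS (⊥ : Submodule A M) (rs.take i) := by
          have h2 : SRS (⊥ : Submodule A M) (rs.take i ++ rs.drop i) := by
            rw [List.take_append_drop]; exact hrs_srs
          exact ((srs_append _ _ _).mp h2).1
        have hiff := soc_iff_of_srs 𝔪 i (⊥ : Submodule A M) (L.take i) (rs.take i)
          hlen_take (by rw [List.length_take]; omega)
          (fun a ha => h𝔪mem a (List.take_subset _ _ ha))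
          (fun a ha => hrsmem a (List.take_subset _ _ ha))
          hprev hrs_take
        obtain ⟨m, hmS, hm𝔪⟩ := hiff.mp hsoc'
        have hid' : i < rs.length := by omega
        have hrsi : SReg ((⊥ : Submodule A M) ⊔ Ideal.ofList (rs.take i) • ⊤) rs[i] :=
          (srs_iff_forall rs ⊥).mp hrs_srs i hid'
        exact hmS (hrsi m (hm𝔪 _ (hrsmem _ (List.getElem_mem hid'))))
  have hfinal : SRS (⊥ : Submodule A M) (L.take d) := by
    rcases le_or_gt d r with h | h
    · exact main d (by omega)
    · have h1 : L.take d = L.take r := by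
        rw [List.take_of_length_le (by omega), List.take_of_length_le (by omega)]
      rw [h1]
      exact main r (by omega)
  refine ⟨(isWeaklyRegular_iff_srs _).mpr hfinal, ?_⟩
  have hne := span_smul_top_ne_top 𝒜 ℳ hsmul hneg hM {x : A | x ∈ L.take d}
    (fun t ht => hLmem t (List.take_subset _ _ ht))
  exact fun h => hne h.symm
end

section
/- Let V be an r-dimensional 𝔽_p-vector space, identified with the span of the variables in the polynomial ring 𝔽_p[x_1,…,x_r]. The i-th elementary symmetric polynomial e_i of the p^r elements of V is GL_r(𝔽_p)-invariant, and e_i = 0 unless i = 0 or i = p^r − p^{r−j} for some 1 ≤ j ≤ r. -/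
namespace Stmt11Aux
open Polynomial

variable {p : ℕ} [hp : Fact p.Prime]

/-- `∏ a : 𝔽_p, (X - C a) = X ^ p - X`. -/
lemma prod_X_sub_C_zmod : ∏ a : ZMod p, (X - C a) = (X : (ZMod p)[X]) ^ p - X := by
  have h1 : (1 : ℕ) < p := hp.out.one_lt
  have hmon : Monic ((X : (ZMod p)[X]) ^ p - X) :=
    monic_X_pow_sub (by rw [degree_X]; exact_mod_cast h1)
  have hroots := FiniteField.roots_X_pow_card_sub_X (ZMod p)
  rw [ZMod.card] at hroots
  have hdeg := FiniteField.X_pow_card_sub_X_natDegree_eq (ZMod p) h1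
  have := prod_multiset_X_sub_C_of_monic_of_roots_card_eq hmon
    (by rw [hroots, hdeg]; simp)
  rw [hroots] at this
  rw [← this]
  rfl

/-- The key universal identity, first in `F[X]` for a field `F`. -/
lemma prod_X_sub_C_mul_field {F : Type*} [Field F] (i : ZMod p →+* F) {z : F} (hz : z ≠ 0) :
    ∏ a : ZMod p, ((X : F[X]) - C (i a * z)) = X ^ p - C (z ^ (p - 1)) * X := by
  have h1 : (1 : ℕ) ≤ p := hp.out.one_lt.le
  have key := congrArg (Polynomial.eval₂RingHom (C.comp i) (C z⁻¹ * X)) (prod_X_sub_C_zmod (p := p))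
  simp only [map_prod, map_sub, map_pow, coe_eval₂RingHom, eval₂_X, eval₂_C, RingHom.coe_comp,
    Function.comp_apply] at key
  calc ∏ a : ZMod p, ((X : F[X]) - C (i a * z))
      = ∏ a : ZMod p, C z * (C z⁻¹ * X - C (i a)) := by
        refine Finset.prod_congr rfl fun a _ => ?_
        rw [mul_sub, ← mul_assoc, ← C_mul, mul_inv_cancel₀ hz, C_1, one_mul, ← C_mul, mul_comm z]
    _ = C (z ^ p) * ((C z⁻¹ * X) ^ p - C z⁻¹ * X) := by
        rw [Finset.prod_mul_distrib, Finset.prod_const, Finset.card_univ, ZMod.card, key, C_pow]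
    _ = X ^ p - C (z ^ (p - 1)) * X := by
        rw [mul_pow, ← C_pow, mul_sub, ← mul_assoc, ← mul_assoc, ← C_mul, ← C_mul,
          ← mul_pow, mul_inv_cancel₀ hz, one_pow, C_1, one_mul]
        congr 2
        rw [pow_sub₀ z hz h1, pow_one]


/-- The identity in `(ZMod p)[T][Y]`. -/
lemma prod_X_sub_C_mul_poly :
    ∏ a : ZMod p, ((X : (Polynomial (ZMod p))[X]) - C (C a * X)) =
      X ^ p - C ((X : Polynomial (ZMod p)) ^ (p - 1)) * X := by
  set D := Polynomial (ZMod p)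
  set F := FractionRing D
  have hinj : Function.Injective (algebraMap D F) := IsFractionRing.injective D F
  apply Polynomial.map_injective (algebraMap D F) hinj
  have hz : algebraMap D F X ≠ 0 := by
    simp only [ne_eq, map_eq_zero_iff _ hinj]
    exact X_ne_zero
  have := prod_X_sub_C_mul_field (F := F) ((algebraMap D F).comp Polynomial.C) hz
  simpa only [Polynomial.map_prod, Polynomial.map_sub, Polynomial.map_pow, Polynomial.map_mul,
    map_X, map_C, map_mul, map_pow, RingHom.coe_comp, Function.comp_apply] using this

/-- The universal identity in any `ZMod p`-algebra. -/
lemma prod_sub_smul {R : Type*} [CommRing R] [Algebra (ZMod p) R] (y t : R) :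
    ∏ a : ZMod p, (y - algebraMap (ZMod p) R a * t) = y ^ p - t ^ (p - 1) * y := by
  have key := congrArg (Polynomial.eval₂RingHom ((Polynomial.aeval t :
    Polynomial (ZMod p) →ₐ[ZMod p] R) : Polynomial (ZMod p) →+* R) y) prod_X_sub_C_mul_poly
  simpa only [map_prod, map_sub, map_pow, map_mul, coe_eval₂RingHom, eval₂_X, eval₂_C,
    AlgHom.coe_ringHom_mk, RingHom.coe_coe, Polynomial.aeval_X, Polynomial.aeval_C] using key

lemma prod_add_smul {R : Type*} [CommRing R] [Algebra (ZMod p) R] (y t : R) :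
    ∏ a : ZMod p, (y + algebraMap (ZMod p) R a * t) = y ^ p - t ^ (p - 1) * y := by
  rw [← prod_sub_smul y t]
  exact Fintype.prod_equiv (Equiv.neg (ZMod p)) _ _ (fun a => by
    simp [sub_eq_add_neg])

/-- A polynomial is `p`-additive if its support consists of powers of `p`. -/
def IsAdd (p : ℕ) {R : Type*} [Semiring R] (Q : R[X]) : Prop :=
  ∀ n : ℕ, Q.coeff n ≠ 0 → ∃ j : ℕ, n = p ^ j

lemma IsAdd.pow_p {R : Type*} [CommRing R] [CharP R p] {Q : R[X]} (h : IsAdd p Q) :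
    IsAdd p (Q ^ p) := by
  haveI : ExpChar R p := ExpChar.prime hp.out
  intro n hn
  rw [← Polynomial.map_frobenius_expand (p := p) Q, Polynomial.coeff_map, Polynomial.coeff_expand hp.out.pos] at hn
  split_ifs at hn with hd
  · obtain ⟨j, hj⟩ := h (n / p) (by intro h0; rw [h0] at hn; simp at hn)
    exact ⟨j + 1, by rw [pow_succ, ← hj, Nat.div_mul_cancel hd]⟩
  · simp at hn

lemma IsAdd.sub_C_mul {R : Type*} [CommRing R] [CharP R p] {Q : R[X]} (h : IsAdd p Q) (c : R) :
    IsAdd p (Q ^ p - C c * Q) := by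
  intro n hn
  rw [Polynomial.coeff_sub, Polynomial.coeff_C_mul] at hn
  by_cases h1 : (Q ^ p).coeff n ≠ 0
  · exact h.pow_p n h1
  · push_neg at h1
    rw [h1, zero_sub, neg_ne_zero] at hn
    exact h n (fun h0 => hn (by rw [h0, mul_zero]))

lemma IsAdd.comp_X_add_C {R : Type*} [CommRing R] [CharP R p] {Q : R[X]} (h : IsAdd p Q)
    (u : R) : Q.comp (X + C u) = Q + C (Q.eval u) := by
  conv_lhs => rw [comp_eq_sum_left, Polynomial.sum_def]
  have step : ∀ n ∈ Q.support,
      C (Q.coeff n) * (X + C u) ^ n = C (Q.coeff n) * X ^ n + C (Q.coeff n * u ^ n) := by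
    intro n hn
    obtain ⟨j, rfl⟩ := h n (mem_support_iff.mp hn)
    rw [add_pow_char_pow, mul_add, ← C_pow, ← C_mul]
  rw [Finset.sum_congr rfl step, Finset.sum_add_distrib]
  congr 1
  · exact (Q.as_sum_support_C_mul_X_pow).symm
  · rw [eval_eq_sum, Polynomial.sum_def, map_sum]

lemma IsAdd.eval_smul {R : Type*} [CommRing R] [Algebra (ZMod p) R] {Q : R[X]}
    (h : IsAdd p Q) (a : ZMod p) (u : R) :
    Q.eval (algebraMap (ZMod p) R a * u) = algebraMap (ZMod p) R a * Q.eval u := by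
  rw [eval_eq_sum, eval_eq_sum, Polynomial.sum_def, Polynomial.sum_def, Finset.mul_sum]
  refine Finset.sum_congr rfl fun n hn => ?_
  obtain ⟨j, rfl⟩ := h n (mem_support_iff.mp hn)
  rw [mul_pow, ← map_pow, ZMod.pow_card_pow]
  ring

/-- Main induction: the product over a spanned set of vectors is additive. -/
lemma isAdd_prod {R : Type*} [CommRing R] [Algebra (ZMod p) R] [CharP R p] :
    ∀ (r : ℕ) (v : Fin r → R),
      IsAdd p (∏ c : Fin r → ZMod p, (X + C (∑ i, algebraMap (ZMod p) R (c i) * v i))) := by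
  intro r
  induction r with
  | zero =>
    intro v
    have h0 : (∏ c : Fin 0 → ZMod p,
        ((X : R[X]) + C (∑ i, algebraMap (ZMod p) R (c i) * v i))) = X := by
      rw [Fintype.prod_unique]
      simp
    rw [h0]
    intro n hn
    rw [coeff_X] at hn
    refine ⟨0, ?_⟩
    rw [pow_zero]
    split_ifs at hn with h1
    · omega
    · exact absurd rfl hn
  | succ r ih =>
    intro v
    have hQ := ih (fun i => v i.succ)
    set Q := ∏ c : Fin r → ZMod p,
      ((X : R[X]) + C (∑ i, algebraMap (ZMod p) R (c i) * v i.succ)) with hQdef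
    set t := Q.eval (v 0) with ht
    have key : (∏ c : Fin (r + 1) → ZMod p,
        ((X : R[X]) + C (∑ i, algebraMap (ZMod p) R (c i) * v i)))
        = Q ^ p - C (t ^ (p - 1)) * Q := by
      rw [← (Fin.consEquiv (fun _ : Fin (r + 1) => ZMod p)).prod_comp, Fintype.prod_prod_type]
      have inner : ∀ a : ZMod p,
          (∏ c : Fin r → ZMod p, ((X : R[X]) +
            C (∑ i, algebraMap (ZMod p) R ((Fin.consEquiv (fun _ : Fin (r+1) => ZMod p)) (a, c) i) * v i)))
          = Q + algebraMap (ZMod p) R[X] a * C t := by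
        intro a
        have : ∀ c : Fin r → ZMod p,
            (∑ i, algebraMap (ZMod p) R ((Fin.consEquiv (fun _ : Fin (r+1) => ZMod p)) (a, c) i) * v i)
            = (∑ i, algebraMap (ZMod p) R (c i) * v i.succ) + algebraMap (ZMod p) R a * v 0 := by
          intro c
          rw [Fin.sum_univ_succ]
          simp [Fin.consEquiv, add_comm]
        simp_rw [this]
        have : ∀ c : Fin r → ZMod p, ((X : R[X]) +
            C ((∑ i, algebraMap (ZMod p) R (c i) * v i.succ) + algebraMap (ZMod p) R a * v 0))
            = ((X : R[X]) + C (∑ i, algebraMap (ZMod p) R (c i) * v i.succ)).comp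
              (X + C (algebraMap (ZMod p) R a * v 0)) := by
          intro c
          rw [add_comp, X_comp, C_comp, C_add]
          ring
        simp_rw [this]
        rw [← prod_comp, ← hQdef, hQ.comp_X_add_C, hQ.eval_smul a (v 0), ← ht,
          Polynomial.algebraMap_apply, ← C_mul]
      rw [Finset.prod_congr rfl (fun a _ => inner a), prod_add_smul Q (C t), ← C_pow]
    rw [key]
    exact hQ.sub_C_mul _
end Stmt11Aux

open MvPolynomial

/-- Let `V` be the `r`-dimensional `𝔽_p`-vector space spanned by
the variables inside `𝔽_p[x₁,…,x_r]`.  The `i`-th elementary symmetric polynomial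
`e i` of the `p^r` elements of `V` (the coefficient of `X^(p^r - i)` in
`∏_{w ∈ V} (X + w)`) is invariant under the `GL_r(𝔽_p)`-action by linear
substitution of the variables, and `e i = 0` unless `i = 0` or
`i = p^r − p^(r−j)` for some `1 ≤ j ≤ r`. -/
theorem stmt11 (p : ℕ) [hp : Fact p.Prime] (r : ℕ)
    (P : Polynomial (MvPolynomial (Fin r) (ZMod p)))
    (hP : P = ∏ c : Fin r → ZMod p,
      (Polynomial.X + Polynomial.C (∑ i, MvPolynomial.C (c i) * MvPolynomial.X i)))
    (e : ℕ → MvPolynomial (Fin r) (ZMod p))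
    (he : ∀ i, e i = P.coeff (p ^ r - i)) :
    (∀ i : ℕ, ∀ g : Matrix.GeneralLinearGroup (Fin r) (ZMod p),
      MvPolynomial.aeval
        (fun i : Fin r => ∑ j, MvPolynomial.C ((g : Matrix (Fin r) (Fin r) (ZMod p)) i j)
          * MvPolynomial.X j) (e i) = e i) ∧
    (∀ i : ℕ, i ≤ p ^ r → e i ≠ 0 →
      i = 0 ∨ ∃ j : ℕ, 1 ≤ j ∧ j ≤ r ∧ i = p ^ r - p ^ (r - j)) := by
  constructor
  · -- invariance under GL_r
    intro i g
    set M : Matrix (Fin r) (Fin r) (ZMod p) := (g : Matrix (Fin r) (Fin r) (ZMod p)) with hM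
    set σ : MvPolynomial (Fin r) (ZMod p) →ₐ[ZMod p] MvPolynomial (Fin r) (ZMod p) :=
      MvPolynomial.aeval (fun i : Fin r => ∑ j, MvPolynomial.C (M i j) * MvPolynomial.X j)
      with hσ
    show σ (e i) = e i
    rw [he, hP]
    refine Eq.trans (Polynomial.coeff_map
      (σ : MvPolynomial (Fin r) (ZMod p) →+* MvPolynomial (Fin r) (ZMod p)) _).symm ?_
    congr 1
    rw [Polynomial.map_prod]
    have hw : ∀ c : Fin r → ZMod p,
        σ (∑ i, MvPolynomial.C (c i) * MvPolynomial.X i)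
        = ∑ i, MvPolynomial.C (Matrix.vecMul c M i) * MvPolynomial.X i := by
      intro c
      rw [map_sum]
      simp only [map_mul, hσ, aeval_C, aeval_X, algebraMap_eq]
      simp_rw [Finset.mul_sum]
      rw [Finset.sum_comm]
      refine Finset.sum_congr rfl fun j _ => ?_
      rw [Matrix.vecMul, dotProduct, map_sum, Finset.sum_mul]
      refine Finset.sum_congr rfl fun i _ => ?_
      rw [C_mul]
      ring
    have hmap : ∀ c : Fin r → ZMod p,
        (Polynomial.X + Polynomial.C (∑ i, MvPolynomial.C (c i) * MvPolynomial.X i)).map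
          (σ : MvPolynomial (Fin r) (ZMod p) →+* MvPolynomial (Fin r) (ZMod p))
        = Polynomial.X + Polynomial.C
            (∑ i, MvPolynomial.C (Matrix.vecMul c M i) * MvPolynomial.X i) := by
      intro c
      rw [Polynomial.map_add, Polynomial.map_X, Polynomial.map_C]
      exact congrArg _ (congrArg _ (hw c))
    rw [Finset.prod_congr rfl fun c _ => hmap c]
    have hMinv : M * ((g⁻¹ : Matrix.GeneralLinearGroup (Fin r) (ZMod p)) :
        Matrix (Fin r) (Fin r) (ZMod p)) = 1 := by
      rw [hM]; exact g.mul_inv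
    have hMinv' : ((g⁻¹ : Matrix.GeneralLinearGroup (Fin r) (ZMod p)) :
        Matrix (Fin r) (Fin r) (ZMod p)) * M = 1 := by
      rw [hM]; exact g.inv_mul
    let eq : (Fin r → ZMod p) ≃ (Fin r → ZMod p) :=
      { toFun := fun c => Matrix.vecMul c M
        invFun := fun c => Matrix.vecMul c ((g⁻¹ : Matrix.GeneralLinearGroup (Fin r) (ZMod p)) :
          Matrix (Fin r) (Fin r) (ZMod p))
        left_inv := fun c => by dsimp only; rw [Matrix.vecMul_vecMul, hMinv, Matrix.vecMul_one]
        right_inv := fun c => by dsimp only; rw [Matrix.vecMul_vecMul, hMinv', Matrix.vecMul_one] }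
    exact Fintype.prod_equiv eq _ _ (fun c => rfl)
  · -- vanishing
    intro i hi hne
    have hP' : P = ∏ c : Fin r → ZMod p, (Polynomial.X + Polynomial.C
        (∑ k, algebraMap (ZMod p) (MvPolynomial (Fin r) (ZMod p)) (c k) * MvPolynomial.X k)) := by
      rw [hP]
      simp_rw [algebraMap_eq]
    have hadd := Stmt11Aux.isAdd_prod (p := p) (R := MvPolynomial (Fin r) (ZMod p)) r
      (fun k => MvPolynomial.X k)
    obtain ⟨j, hj⟩ := hadd (p ^ r - i) (by
      rw [← hP']
      intro h0
      exact hne (by rw [he, h0]))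
    have hp1 : 1 < p := hp.out.one_lt
    have hjr : j ≤ r := by
      by_contra hcon
      push_neg at hcon
      have h1 : p ^ r < p ^ j := Nat.pow_lt_pow_right hp1 hcon
      have h2 : p ^ r - i ≤ p ^ r := Nat.sub_le _ _
      omega
    rcases eq_or_lt_of_le hjr with h | h
    · left
      subst h
      omega
    · right
      have hle : p ^ j ≤ p ^ r := Nat.pow_le_pow_right hp1.le hjr
      refine ⟨r - j, by omega, by omega, ?_⟩
      rw [Nat.sub_sub_self hjr]
      omega
end

section
/- Let G be a finite group, k a field of characteristic p, and suppose ζ_1,…,ζ_r ∈ H*(G,k) is a homogeneous system of parameters satisfying the rank-restriction condition (ζ_i restricts to zero on every elementary abelian p-subgroup of rank less than i). Then for every elementary abelian p-subgroup E of rank i, the restrictions of ζ_1,…,ζ_i to H*(E,k) form a homogeneous system of parameters for H*(E,k), and ζ_{i+1},…,ζ_r restrict to zero. -/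
/-- A subgroup is elementary abelian for the prime `p`: abelian of exponent
dividing `p`. -/
def IsElementaryAbelian (p : ℕ) {G : Type} [Group G] (E : Subgroup G) : Prop :=
  (∀ x ∈ E, x ^ p = 1) ∧ ∀ x ∈ E, ∀ y ∈ E, x * y = y * x

/-- Let `G` be a finite group and `k` a field of characteristic
`p`, and suppose `ζ₁,…,ζ_r ∈ H*(G,k)` is a homogeneous system of parameters
satisfying the rank-restriction condition (`ζᵢ` restricts to zero on every
elementary abelian `p`-subgroup of rank `< i`).  Then for every elementary
abelian `p`-subgroup `E` of rank `i`, the restrictions of `ζ₁,…,ζᵢ` to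
`H*(E,k)` form a homogeneous system of parameters for `H*(E,k)` (i.e. `H*(E,k)`,
of Krull dimension `i`, is module-finite over the subalgebra they generate),
and `ζ_{i+1},…,ζ_r` restrict to zero.  The cohomology rings (finitely generated
graded-commutative `k`-algebras, by Evens' theorem) are supplied as abstract
data, `H*(E,k)` being module-finite over the image of restriction. -/
theorem stmt14
    (p : ℕ) [Fact p.Prime] {G : Type} [Group G] [Finite G]
    (k : Type) [Field k] (hchar : CharP k p)
    -- `H*(G,k)`, a finitely generated graded `k`-algebra:
    (HG : Type) [CommRing HG] [Algebra k HG] (hfg : Algebra.FiniteType k HG)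
    (𝒜 : ℤ → Submodule k HG) [GradedAlgebra 𝒜]
    -- `H*(E,k)` for subgroups `E`, with restriction maps:
    (HE : Subgroup G → Type) [∀ E, CommRing (HE E)] [∀ E, Algebra k (HE E)]
    (res : ∀ E : Subgroup G, HG →ₐ[k] HE E)
    -- Evens: `H*(E,k)` is module-finite over the image of restriction:
    (hEvens : ∀ E : Subgroup G, IsElementaryAbelian p E →
      Module.Finite ↥(res E).range (HE E))
    -- the rank of an elementary abelian subgroup, = Krull dimension of `H*(E,k)`:
    (rk : Subgroup G → ℕ)
    (hrkdim : ∀ E : Subgroup G, IsElementaryAbelian p E →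
      ringKrullDim (HE E) = (rk E : WithBot (WithTop ℕ)))
    -- `ζ₁,…,ζ_r` is a homogeneous system of parameters for `H*(G,k)`:
    (r : ℕ) (ζ : Fin r → HG) (n : Fin r → ℤ)
    (hζhom : ∀ i, ζ i ∈ 𝒜 (n i)) (hζpos : ∀ i, 0 < n i)
    (hsop : Module.Finite ↥(Algebra.adjoin k (Set.range ζ)) HG)
    (hdim : ringKrullDim HG = (r : WithBot (WithTop ℕ)))
    -- the rank-restriction condition:
    (hrr : ∀ i : Fin r, ∀ E : Subgroup G, IsElementaryAbelian p E →
      rk E < (i : ℕ) + 1 → res E (ζ i) = 0) :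
    ∀ E : Subgroup G, IsElementaryAbelian p E →
      -- `ζ_{i+1},…,ζ_r` restrict to zero on `E` (of rank `i = rk E`) …
      (∀ j : Fin r, rk E ≤ (j : ℕ) → res E (ζ j) = 0) ∧
      -- … and the restrictions of `ζ₁,…,ζᵢ` form a homogeneous system of
      -- parameters for `H*(E,k)`:
      Module.Finite
        ↥(Algebra.adjoin k ((fun j => res E (ζ j)) '' {j : Fin r | (j : ℕ) < rk E}))
        (HE E) := by
  intro E hE
  have hzero : ∀ j : Fin r, rk E ≤ (j : ℕ) → res E (ζ j) = 0 := fun j hj =>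
    hrr j E hE (Nat.lt_succ_of_le hj)
  refine ⟨hzero, ?_⟩
  -- The relevant subalgebra equals the one generated by all restrictions.
  have hadj : Algebra.adjoin k ((fun j => res E (ζ j)) '' {j : Fin r | (j : ℕ) < rk E})
      = Algebra.adjoin k (res E '' Set.range ζ) := by
    apply le_antisymm
    · apply Algebra.adjoin_mono
      rintro _ ⟨j, _, rfl⟩
      exact ⟨ζ j, ⟨j, rfl⟩, rfl⟩
    · rw [Algebra.adjoin_le_iff]
      rintro _ ⟨_, ⟨j, rfl⟩, rfl⟩
      by_cases hj : (j : ℕ) < rk E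
      · exact Algebra.subset_adjoin ⟨j, hj, rfl⟩
      · rw [hzero j (le_of_not_gt hj)]
        exact Subalgebra.zero_mem _
  rw [hadj]
  -- Notation.
  set f := res E with hf
  -- `HE E` is an `HG`-algebra via `f`.
  letI : Algebra HG (HE E) := f.toRingHom.toAlgebra
  letI : Algebra HG ↥f.range := f.rangeRestrict.toRingHom.toAlgebra
  haveI t1 : IsScalarTower HG ↥f.range (HE E) := IsScalarTower.of_algebraMap_eq fun x => rfl
  haveI tk : IsScalarTower k HG (HE E) := IsScalarTower.of_algebraMap_eq fun x =>
    (f.commutes x).symm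
  haveI hEv : Module.Finite ↥f.range (HE E) := hEvens E hE
  -- `HE E` is module-finite over `HG` since it is so over `f.range`.
  haveI hf1 : Module.Finite HG (HE E) := by
    constructor
    have hsurj : Function.Surjective (algebraMap HG ↥f.range) := fun y => by
      obtain ⟨x, hx⟩ := y.2
      exact ⟨x, Subtype.ext hx⟩
    have h := Submodule.fg_restrictScalars (S := (⊤ : Submodule ↥f.range (HE E))) hEv.fg_top hsurj
    simpa using h
  -- `HE E` is module-finite over `B := adjoin k (range ζ)` by transitivity.
  haveI hf2 : Module.Finite ↥(Algebra.adjoin k (Set.range ζ)) (HE E) :=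
    Module.Finite.trans HG (HE E)
  -- Finally, pass to the image subalgebra `A' = adjoin k (f '' range ζ)`.
  letI : Algebra ↥(Algebra.adjoin k (Set.range ζ)) ↥(Algebra.adjoin k (f '' Set.range ζ)) :=
    RingHom.toAlgebra
      { toFun := fun b => ⟨f (b : HG), by
          rw [← AlgHom.map_adjoin]
          exact ⟨(b : HG), b.2, rfl⟩⟩
        map_one' := Subtype.ext (map_one f)
        map_mul' := fun x y => Subtype.ext (map_mul f (x : HG) (y : HG))
        map_zero' := Subtype.ext (map_zero f)
        map_add' := fun x y => Subtype.ext (map_add f (x : HG) (y : HG)) }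
  haveI t2 : IsScalarTower ↥(Algebra.adjoin k (Set.range ζ))
      ↥(Algebra.adjoin k (f '' Set.range ζ)) (HE E) :=
    IsScalarTower.of_algebraMap_eq fun x => rfl
  exact Module.Finite.of_restrictScalars_finite ↥(Algebra.adjoin k (Set.range ζ))
    ↥(Algebra.adjoin k (f '' Set.range ζ)) (HE E)
end

section
/- Let G be a finite group of p-rank r ≥ 2 and k a field of characteristic p, and let ζ_1,…,ζ_r be a homogeneous system of parameters for H*(G,k) with |ζ_i| = n_i. Then the tensor product L_{ζ_1} ⊗ ⋯ ⊗ L_{ζ_r} of the Carlson modules is a projective kG-module, and L_{ζ_1} ⊗ ⋯ ⊗ L_{ζ_{r−1}} is a periodic kG-module. -/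
section helpers

lemma stmt16_dim_le_of_isIntegral {R S : Type*} [CommRing R] [CommRing S]
    (f : R →+* S) (hf : f.IsIntegral) : ringKrullDim S ≤ ringKrullDim R := by
  letI : Algebra R S := f.toAlgebra
  refine Order.krullDim_le_of_strictMono
    (fun p : PrimeSpectrum S => ⟨p.asIdeal.comap f, p.asIdeal.comap_isPrime f⟩) ?_
  intro p q hpq
  have hle : p.asIdeal ≤ q.asIdeal := le_of_lt hpq
  obtain ⟨x, hxq, hxp⟩ := SetLike.exists_of_lt (show p.asIdeal < q.asIdeal from hpq)
  haveI : p.asIdeal.IsPrime := p.isPrime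
  exact Ideal.comap_lt_comap_of_integral_mem_sdiff (R := R) (S := S)
    (I := p.asIdeal) (J := q.asIdeal) hle ⟨hxq, hxp⟩ (hf x)

lemma stmt16_dim_quot_le {R : Type*} [CommRing R] {T K : Ideal R} (h : T ≤ K.radical) :
    ringKrullDim (R ⧸ K) ≤ ringKrullDim (R ⧸ T) := by
  have hsurjK : Function.Surjective (Ideal.Quotient.mk K) := Ideal.Quotient.mk_surjective
  have hsurjT : Function.Surjective (Ideal.Quotient.mk T) := Ideal.Quotient.mk_surjective
  have key : ∀ p : PrimeSpectrum (R ⧸ K), T ≤ p.asIdeal.comap (Ideal.Quotient.mk K) := by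
    intro p
    have hK : K ≤ p.asIdeal.comap (Ideal.Quotient.mk K) := fun x hx => by
      simp [Ideal.Quotient.eq_zero_iff_mem.2 hx]
    exact le_trans h (by
      rw [← (Ideal.comap_isPrime (Ideal.Quotient.mk K) p.asIdeal).radical_le_iff] at hK
      exact hK)
  refine Order.krullDim_le_of_strictMono (fun p : PrimeSpectrum (R ⧸ K) =>
    (⟨(p.asIdeal.comap (Ideal.Quotient.mk K)).map (Ideal.Quotient.mk T),
      Ideal.map_isPrime_of_surjective hsurjT (by
        rw [Ideal.mk_ker]; exact key p)⟩ : PrimeSpectrum (R ⧸ T))) ?_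
  intro p q hpq
  have h1 : p.asIdeal.comap (Ideal.Quotient.mk K) < q.asIdeal.comap (Ideal.Quotient.mk K) := by
    refine lt_of_le_of_ne (Ideal.comap_mono (le_of_lt hpq)) ?_
    intro he
    exact ne_of_lt hpq (PrimeSpectrum.ext
      (Ideal.comap_injective_of_surjective _ hsurjK he))
  refine lt_of_le_of_ne (Ideal.map_mono (le_of_lt h1)) ?_
  intro he
  apply ne_of_lt h1
  have e1 := Ideal.comap_map_of_surjective _ hsurjT
    (p.asIdeal.comap (Ideal.Quotient.mk K))
  have e2 := Ideal.comap_map_of_surjective _ hsurjT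
    (q.asIdeal.comap (Ideal.Quotient.mk K))
  have he' := congrArg PrimeSpectrum.asIdeal he
  have := congrArg (Ideal.comap (Ideal.Quotient.mk T)) he'
  rw [e1, e2, ← RingHom.ker_eq_comap_bot, Ideal.mk_ker,
    sup_eq_left.2 (key p), sup_eq_left.2 (key q)] at this
  exact this

lemma stmt16_dim_poly_le_one (k : Type*) [Field k] :
    ringKrullDim (Polynomial k) ≤ 1 := by
  refine iSup_le fun (c : LTSeries (PrimeSpectrum (Polynomial k))) => ?_
  have hlen : c.length ≤ 1 := by
    by_contra hc
    push_neg at hc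
    have h01 : c.toFun ⟨0, by omega⟩ < c.toFun ⟨1, by omega⟩ := by
      have := c.step ⟨0, by omega⟩; simpa using this
    have h12 : c.toFun ⟨1, by omega⟩ < c.toFun ⟨2, by omega⟩ := by
      have := c.step ⟨1, by omega⟩; simpa using this
    have h01' : (c.toFun ⟨0, by omega⟩).asIdeal < (c.toFun ⟨1, by omega⟩).asIdeal := h01
    have h12' : (c.toFun ⟨1, by omega⟩).asIdeal < (c.toFun ⟨2, by omega⟩).asIdeal := h12
    have hne : (c.toFun ⟨1, by omega⟩).asIdeal ≠ ⊥ := by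
      intro hb
      rw [hb] at h01'
      exact not_lt_bot h01'
    haveI := (c.toFun ⟨1, by omega⟩).isPrime
    have hmax : (c.toFun ⟨1, by omega⟩).asIdeal.IsMaximal :=
      IsPrime.to_maximal_ideal hne
    have heq := hmax.eq_of_le (c.toFun ⟨2, by omega⟩).isPrime.ne_top (le_of_lt h12')
    rw [heq] at h12'
    exact lt_irrefl _ h12'
  exact_mod_cast hlen

lemma stmt16_graded_radical {k H : Type*} [Field k] [CommRing H] [Algebra k H]
    (𝒜 : ℤ → Submodule k H) [GradedAlgebra 𝒜] [Nontrivial H]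
    {ι : Type*} (ζ : ι → H) (n : ι → ℤ)
    (hζhom : ∀ i, ζ i ∈ 𝒜 (n i))
    (hsop : Module.Finite ↥(Algebra.adjoin k (Set.range ζ)) H)
    {d : ℤ} (hd : 0 < d) {x : H} (hx : x ∈ 𝒜 d) :
    x ∈ (Ideal.span (Set.range ζ)).radical := by
  classical
  set A := Algebra.adjoin k (Set.range ζ) with hA
  set I : Ideal H := Ideal.span (Set.range ζ) with hI
  have hIhom : I.IsHomogeneous 𝒜 :=
    Ideal.homogeneous_span 𝒜 _ (by rintro y ⟨i, rfl⟩; exact ⟨n i, hζhom i⟩)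
  have hsplit : ∀ a : ↥A, ∃ c : k, (a : H) - algebraMap k H c ∈ I := by
    rintro ⟨a, ha⟩
    refine Algebra.adjoin_induction (p := fun y _ => ∃ c : k, y - algebraMap k H c ∈ I)
      ?_ ?_ ?_ ?_ ha
    · rintro y hy
      exact ⟨0, by simpa using Ideal.subset_span hy⟩
    · intro c
      exact ⟨c, by simp⟩
    · rintro y z _ _ ⟨c₁, hc₁⟩ ⟨c₂, hc₂⟩
      refine ⟨c₁ + c₂, ?_⟩
      have : y + z - algebraMap k H (c₁ + c₂)
          = (y - algebraMap k H c₁) + (z - algebraMap k H c₂) := by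
        rw [map_add]; ring
      rw [this]; exact Ideal.add_mem _ hc₁ hc₂
    · rintro y z _ _ ⟨c₁, hc₁⟩ ⟨c₂, hc₂⟩
      refine ⟨c₁ * c₂, ?_⟩
      have : y * z - algebraMap k H (c₁ * c₂)
          = y * (z - algebraMap k H c₂) + (y - algebraMap k H c₁) * algebraMap k H c₂ := by
        rw [map_mul]; ring
      rw [this]
      exact Ideal.add_mem _ (Ideal.mul_mem_left _ _ hc₂) (Ideal.mul_mem_right _ _ hc₁)
  haveI := hsop
  haveI : Algebra.IsIntegral ↥A H := Algebra.IsIntegral.of_finite ↥A H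
  obtain ⟨P, hmonic, heval⟩ := Algebra.IsIntegral.isIntegral (R := ↥A) x
  set m := P.natDegree with hm
  have hm0 : m ≠ 0 := by
    intro h0
    have h1 : P = 1 := (Polynomial.Monic.natDegree_eq_zero hmonic).1 h0
    rw [h1] at heval
    simp at heval
  have hs : x ^ m = -∑ j ∈ Finset.range m, ((P.coeff j : H) * x ^ j) := by
    have h1 := Polynomial.aeval_eq_sum_range (R := ↥A) (p := P) x
    rw [Polynomial.aeval_def, heval] at h1
    rw [Finset.sum_range_succ, hmonic.coeff_natDegree, one_smul] at h1
    have h2 : x ^ m = -∑ j ∈ Finset.range m, (P.coeff j) • x ^ j :=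
      eq_neg_of_add_eq_zero_right h1.symm
    rw [h2]
    simp only [Algebra.smul_def]
    rfl
  choose c hc using fun j : ℕ => hsplit (P.coeff j)
  set u : H := ∑ j ∈ Finset.range m, algebraMap k H (c j) * x ^ j with hu
  have hv : x ^ m + u ∈ I := by
    rw [hs]
    have : -∑ j ∈ Finset.range m, ((P.coeff j : H) * x ^ j) + u
        = -∑ j ∈ Finset.range m, (((P.coeff j : H) - algebraMap k H (c j)) * x ^ j) := by
      simp only [hu, sub_mul, Finset.sum_sub_distrib, neg_sub]
      abel
    rw [this]
    exact neg_mem (Ideal.sum_mem _ fun j _ => Ideal.mul_mem_right _ _ (hc j))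
  have hxe : x ^ m ∈ 𝒜 (m • d) := SetLike.pow_mem_graded m hx
  have hproj : GradedRing.proj 𝒜 (m • d) (x ^ m + u) ∈ I := by
    rw [GradedRing.proj_apply]
    exact hIhom (m • d) hv
  rw [map_add] at hproj
  have hπx : GradedRing.proj 𝒜 (m • d) (x ^ m) = x ^ m := by
    rw [GradedRing.proj_apply, DirectSum.decompose_of_mem_same 𝒜 hxe]
  have hπu : GradedRing.proj 𝒜 (m • d) u = 0 := by
    rw [hu, map_sum]
    refine Finset.sum_eq_zero fun j hj => ?_
    have hmem : algebraMap k H (c j) * x ^ j ∈ 𝒜 (0 + j • d) :=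
      SetLike.mul_mem_graded (SetLike.algebraMap_mem_graded 𝒜 (c j))
        (SetLike.pow_mem_graded j hx)
    rw [GradedRing.proj_apply, DirectSum.decompose_of_mem_ne 𝒜 hmem]
    rw [zero_add]
    have hj' : (j : ℤ) * d < (m : ℤ) * d := by
      have : (j : ℤ) < (m : ℤ) := by exact_mod_cast Finset.mem_range.1 hj
      exact mul_lt_mul_of_pos_right this hd
    intro he
    rw [nsmul_eq_mul, nsmul_eq_mul] at he
    exact ne_of_lt hj' he
  rw [hπx, hπu, add_zero] at hproj
  exact ⟨m, hproj⟩

end helpers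


/-- Let `G` be a finite group of `p`-rank `r ≥ 2`, `k` a field
of characteristic `p`, and `ζ₁,…,ζ_r` a homogeneous system of parameters for
`H*(G,k)`.  Then the tensor product `L_{ζ₁} ⊗ ⋯ ⊗ L_{ζ_r}` of the Carlson
modules is projective, and `L_{ζ₁} ⊗ ⋯ ⊗ L_{ζ_{r−1}}` is periodic.  The theory
of support varieties is supplied as abstract data: `V_G(M)` is the zero locus of
an ideal `J M` of `H = H*(G,k)`; tensor products intersect varieties; a module
is projective iff its variety is the origin `{𝔪}`; a module is periodic iff its
variety is at most one-dimensional; and `V_G(L_ζ)` is the hypersurface `V⟨ζ⟩`. -/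
theorem stmt16
    (p : ℕ) [Fact p.Prime] {G : Type} [Group G] [Finite G]
    (k : Type) [Field k] (hchar : CharP k p)
    -- `H = H*(G,k)`, a graded `k`-algebra; the `p`-rank `r = dim H ≥ 2`:
    (H : Type) [CommRing H] [Algebra k H]
    (𝒜 : ℤ → Submodule k H) [GradedAlgebra 𝒜]
    (r : ℕ) (hr : 2 ≤ r)
    (hdim : ringKrullDim H = (r : WithBot (WithTop ℕ)))
    -- finitely generated `kG`-modules with tensor product and trivial module:
    (Md : Type) (tensor : Md → Md → Md) (one : Md)
    (hone : ∀ M, tensor one M = M)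
    -- support varieties, given by defining ideals `J M ⊴ H` (`V_G(M) = V(J M)`):
    (J : Md → Ideal H)
    (hJtensor : ∀ M N : Md, (J (tensor M N)).radical = (J M ⊔ J N).radical)
    -- the irrelevant maximal ideal, i.e. the origin of `V_G`:
    (𝔪 : Ideal H) (h𝔪 : 𝔪.IsMaximal)
    (h𝔪' : 𝔪 = Ideal.span (⋃ n : {n : ℤ // 0 < n}, ((𝒜 n.1 : Submodule k H) : Set H)))
    -- a module is projective iff its variety is `{0}`:
    (IsProj IsPeriodic : Md → Prop)
    (hproj : ∀ M : Md, IsProj M ↔ 𝔪 ≤ (J M).radical)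
    -- a module is periodic iff its variety is at most one-dimensional:
    (hper : ∀ M : Md, IsPeriodic M ↔ ringKrullDim (H ⧸ J M) ≤ (1 : WithBot (WithTop ℕ)))
    -- `ζ₁,…,ζ_r` is a homogeneous system of parameters for `H`:
    (ζ : Fin r → H) (n : Fin r → ℤ)
    (hζhom : ∀ i, ζ i ∈ 𝒜 (n i)) (hζpos : ∀ i, 0 < n i)
    (hsop : Module.Finite ↥(Algebra.adjoin k (Set.range ζ)) H)
    -- the Carlson modules `L_{ζᵢ}`, with `V_G(L_ζ) = V⟨ζ⟩`:
    (L : Fin r → Md)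
    (hL : ∀ i, (J (L i)).radical = (Ideal.span {ζ i}).radical) :
    IsProj ((List.ofFn L).foldr tensor one) ∧
    IsPeriodic (((List.ofFn L).take (r - 1)).foldr tensor one) := by
  classical
  haveI : Nontrivial H := by
    by_contra hns
    rw [not_nontrivial_iff_subsingleton] at hns
    rw [ringKrullDim_eq_bot_of_subsingleton] at hdim
    exact absurd hdim.symm (WithBot.natCast_ne_bot r)
  -- members of a foldr have their defining ideal inside the radical
  have foldA : ∀ (l : List Md) (M : Md), M ∈ l →
      J M ≤ (J (l.foldr tensor one)).radical := by
    intro l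
    induction l with
    | nil => intro M hM; cases hM
    | cons N t ih =>
      intro M hM
      rcases List.mem_cons.1 hM with rfl | hMt
      · rw [List.foldr_cons, hJtensor]
        exact le_trans le_sup_left Ideal.le_radical
      · rw [List.foldr_cons, hJtensor]
        exact le_trans (ih M hMt) (Ideal.radical_mono le_sup_right)
  have hzmem : ∀ (l : List Md) (i : Fin r), L i ∈ l →
      ζ i ∈ (J (l.foldr tensor one)).radical := by
    intro l i hil
    have h1 : ζ i ∈ (J (L i)).radical := by
      rw [hL i]
      exact Ideal.le_radical (Ideal.mem_span_singleton_self _)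
    have h2 : (J (L i)).radical ≤ (J (l.foldr tensor one)).radical := by
      calc (J (L i)).radical ≤ ((J (l.foldr tensor one)).radical).radical :=
            Ideal.radical_mono (foldA l (L i) hil)
        _ = (J (l.foldr tensor one)).radical := Ideal.radical_idem _
    exact h2 h1
  constructor
  · -- projectivity
    rw [hproj, h𝔪']
    refine Ideal.span_le.2 ?_
    rintro x hx
    rw [Set.mem_iUnion] at hx
    obtain ⟨⟨d, hd⟩, hx⟩ := hx
    have h1 : x ∈ (Ideal.span (Set.range ζ)).radical :=
      stmt16_graded_radical 𝒜 ζ n hζhom hsop hd hx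
    have h2 : Ideal.span (Set.range ζ) ≤ (J ((List.ofFn L).foldr tensor one)).radical := by
      refine Ideal.span_le.2 ?_
      rintro y ⟨i, rfl⟩
      exact hzmem _ i (by rw [List.mem_ofFn]; exact ⟨i, rfl⟩)
    have h3 : (Ideal.span (Set.range ζ)).radical ≤
        (J ((List.ofFn L).foldr tensor one)).radical := by
      calc (Ideal.span (Set.range ζ)).radical
          ≤ ((J ((List.ofFn L).foldr tensor one)).radical).radical :=
            Ideal.radical_mono h2
        _ = _ := Ideal.radical_idem _
    exact h3 h1
  · -- periodicity
    rw [hper]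
    set lst : List Md := (List.ofFn L).take (r - 1) with hlst
    set T : Ideal H := Ideal.span (ζ '' {i : Fin r | (i : ℕ) < r - 1}) with hT
    have hlstlen : lst.length = r - 1 := by
      rw [hlst, List.length_take, List.length_ofFn]
      omega
    have hmemlst : ∀ i : Fin r, (i : ℕ) < r - 1 → L i ∈ lst := by
      intro i hi
      have hilt : (i : ℕ) < lst.length := by omega
      have hget : lst[(i : ℕ)] = L i := by
        simp [hlst, List.getElem_take]
      rw [← hget]
      exact List.getElem_mem hilt
    have hTrad : T ≤ (J (lst.foldr tensor one)).radical := by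
      refine Ideal.span_le.2 ?_
      rintro y ⟨i, hi, rfl⟩
      exact hzmem lst i (hmemlst i hi)
    refine le_trans (stmt16_dim_quot_le hTrad) ?_
    -- dimension of H ⧸ T is at most 1
    set φ : H →+* H ⧸ T := Ideal.Quotient.mk T with hφ
    set lastIdx : Fin r := ⟨r - 1, by omega⟩ with hlast
    set t : H ⧸ T := φ (ζ lastIdx) with ht
    set B : Subalgebra k (H ⧸ T) := Algebra.adjoin k {t} with hB
    have hz0 : ∀ i : Fin r, (i : ℕ) < r - 1 → φ (ζ i) = 0 := fun i hi =>
      Ideal.Quotient.eq_zero_iff_mem.2 (Ideal.subset_span ⟨i, hi, rfl⟩)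
    set A := Algebra.adjoin k (Set.range ζ) with hA
    have himg : ∀ a : ↥A, φ (a : H) ∈ B := by
      rintro ⟨a, ha⟩
      refine Algebra.adjoin_induction (p := fun y _ => φ y ∈ B) ?_ ?_ ?_ ?_ ha
      · rintro y ⟨i, rfl⟩
        by_cases hi : (i : ℕ) < r - 1
        · rw [hz0 i hi]; exact B.zero_mem
        · have : i = lastIdx := Fin.ext (by simp [hlast]; omega)
          rw [this]
          exact Algebra.subset_adjoin rfl
      · intro c
        have : φ (algebraMap k H c) = algebraMap k (H ⧸ T) c := by
          rw [hφ, ← Ideal.Quotient.mkₐ_eq_mk k T]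
          exact (Ideal.Quotient.mkₐ k T).commutes c
        rw [this]
        exact B.algebraMap_mem c
      · intro y z _ _ hy hz
        rw [map_add]
        exact B.add_mem hy hz
      · intro y z _ _ hy hz
        rw [map_mul]
        exact B.mul_mem hy hz
    haveI := hsop
    haveI : Algebra.IsIntegral ↥A H := Algebra.IsIntegral.of_finite ↥A H
    have hint : (algebraMap ↥B (H ⧸ T)).IsIntegral := by
      intro s
      obtain ⟨h, rfl⟩ := Ideal.Quotient.mk_surjective s
      obtain ⟨P, hmonic, heval⟩ := Algebra.IsIntegral.isIntegral (R := ↥A) h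
      set ψ : ↥A →+* ↥B :=
        RingHom.codRestrict (φ.comp (algebraMap ↥A H)) B (fun a => himg a) with hψ
      refine ⟨P.map ψ, hmonic.map ψ, ?_⟩
      rw [Polynomial.eval₂_map]
      have hcomp : (algebraMap ↥B (H ⧸ T)).comp ψ = φ.comp (algebraMap ↥A H) := by
        ext a
        rfl
      rw [hcomp, ← Polynomial.hom_eval₂]
      rw [heval, map_zero]
    have hd1 : ringKrullDim (H ⧸ T) ≤ ringKrullDim ↥B :=
      stmt16_dim_le_of_isIntegral _ hint
    have hd2 : ringKrullDim ↥B ≤ ringKrullDim (Polynomial k) := by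
      have hmem : ∀ q : Polynomial k, Polynomial.aeval t q ∈ B := by
        intro q
        rw [hB, Algebra.adjoin_singleton_eq_range_aeval]
        exact ⟨q, rfl⟩
      refine ringKrullDim_le_of_surjective
        ((Polynomial.aeval t).codRestrict B hmem).toRingHom ?_
      rintro ⟨b, hb⟩
      rw [hB, Algebra.adjoin_singleton_eq_range_aeval] at hb
      obtain ⟨q, hq⟩ := hb
      exact ⟨q, Subtype.ext hq⟩
    exact le_trans hd1 (le_trans hd2 (stmt16_dim_poly_le_one k))
end
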